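/- arXiv:2107.07792 — 3 statements merged into one kernel-verified Lean document; each statement's English description precedes it below -/
import Mathlib

section
/- Let P : [0,1] → R and Q : [0,1] → R be curves with d_F(P, Q) ≤ δ and let P' be a δ-signature of P with vertices v_1, …, v_ℓ in order. Then there exists a δ-visiting order of P' on Q: a nondecreasing sequence of indices i_1 ≤ … ≤ i_ℓ into the ordered vertex sequence u_1, …, u_k of Q such that |v_j − u_{i_j}| ≤ δ for each j. -/
/-- Continuous Fréchet distance between curves on the unit interval. -/
noncomputable def frechetDist {E : Type*} [PseudoMetricSpace E] (P Q : unitInterval → E) : ℝ :=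
  sInf {r : ℝ | ∃ f g : unitInterval → unitInterval,
    Continuous f ∧ Monotone f ∧ Function.Surjective f ∧
    Continuous g ∧ Monotone g ∧ Function.Surjective g ∧
    ∀ t, dist (P (f t)) (Q (g t)) ≤ r}

/-- The directed line segment from `a` to `b`, parametrized linearly. -/
noncomputable def segCurve {E : Type*} [AddCommGroup E] [Module ℝ E] (a b : E) :
    unitInterval → E :=
  fun t => (1 - (t : ℝ)) • a + (t : ℝ) • b

/-- The polygonal curve with `n+1` vertices `p 0, …, p n`, parametrized uniformly. -/
noncomputable def polyCurve {E : Type*} [AddCommGroup E] [Module ℝ E]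
    (n : ℕ) (p : Fin (n + 1) → E) (t : unitInterval) : E :=
  let x : ℝ := (t : ℝ) * n
  let i : ℕ := min (Nat.floor x) (n - 1)
  (1 - (x - (i : ℝ))) • p ⟨min i n, Nat.lt_succ_of_le (min_le_right i n)⟩ +
    (x - (i : ℝ)) • p ⟨min (i + 1) n, Nat.lt_succ_of_le (min_le_right (i + 1) n)⟩

/-- The subcurve `Q[a,b]`, linearly reparametrized over the unit interval. -/
noncomputable def subcurve {E : Type*} (Q : unitInterval → E) (a b : unitInterval) :
    unitInterval → E :=
  fun s => Q ⟨(1 - (s : ℝ)) * (a : ℝ) + (s : ℝ) * (b : ℝ), Set.mem_Icc.mpr ⟨by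
      have hs0 := unitInterval.nonneg s; have hs1 := unitInterval.le_one s
      have ha0 := unitInterval.nonneg a; have hb0 := unitInterval.nonneg b
      have h1 : (0:ℝ) ≤ (1 - (s:ℝ)) * (a:ℝ) := mul_nonneg (by linarith) ha0
      have h2 : (0:ℝ) ≤ (s:ℝ) * (b:ℝ) := mul_nonneg hs0 hb0
      linarith, by
      have hs0 := unitInterval.nonneg s; have hs1 := unitInterval.le_one s
      have ha1 := unitInterval.le_one a; have hb1 := unitInterval.le_one b
      have h1 : (1 - (s:ℝ)) * (a:ℝ) ≤ (1 - (s:ℝ)) * 1 :=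
        mul_le_mul_of_nonneg_left ha1 (by linarith)
      have h2 : (s:ℝ) * (b:ℝ) ≤ (s:ℝ) * 1 := mul_le_mul_of_nonneg_left hb1 hs0
      linarith⟩⟩

/-- The parameter (in the uniform parametrization) of the `i`-th vertex of a
polygonal curve with `n` edges. -/
noncomputable def vparam (n : ℕ) (i : Fin (n + 1)) : unitInterval :=
  ⟨((i : ℕ) : ℝ) / (n : ℝ), Set.mem_Icc.mpr ⟨by positivity, by
    have h1 : ((i : ℕ) : ℝ) ≤ (n : ℝ) := by exact_mod_cast Nat.lt_succ_iff.mp i.isLt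
    rcases Nat.eq_zero_or_pos n with h | h
    · subst h; simp
    · rw [div_le_one (by exact_mod_cast h)]; exact h1⟩⟩

/-- `P` is `c`-monotone increasing. -/
def ApproxInc (c : ℝ) (P : unitInterval → ℝ) : Prop :=
  ∀ s t : unitInterval, s ≤ t → P s - c ≤ P t

/-- `P` is `c`-monotone decreasing. -/
def ApproxDec (c : ℝ) (P : unitInterval → ℝ) : Prop :=
  ∀ s t : unitInterval, s ≤ t → P t ≤ P s + c

/-- `P` is `c`-monotone. -/
def ApproxMono (c : ℝ) (P : unitInterval → ℝ) : Prop :=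
  ApproxInc c P ∨ ApproxDec c P

/-- Concatenation of two curves (first on `[0,1/2]`, second on `[1/2,1]`). -/
noncomputable def concatC {E : Type*} (P Q : unitInterval → E) : unitInterval → E :=
  fun t =>
    if h : (t : ℝ) ≤ 1 / 2 then
      P ⟨2 * (t : ℝ), Set.mem_Icc.mpr ⟨by have := unitInterval.nonneg t; linarith,
        by linarith⟩⟩
    else
      Q ⟨2 * (t : ℝ) - 1, Set.mem_Icc.mpr ⟨by push_neg at h; linarith,
        by have := unitInterval.le_one t; linarith⟩⟩

/-- The data of a `δ`-straightening of the curve `Q`: parameters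
`0 = t 0 < … < t (Fin.last ℓ) = 1` such that each shortcut segment is within
Fréchet distance `δ` of the corresponding subcurve (locality), and each
corresponding subcurve stays in the closed interval spanned by the shortcut's
endpoints (edge-range-preserving). -/
def StraighteningData (δ : ℝ) (Q : unitInterval → ℝ) (ℓ : ℕ)
    (t : Fin (ℓ + 1) → unitInterval) : Prop :=
  StrictMono t ∧ t 0 = 0 ∧ t (Fin.last ℓ) = 1 ∧
    ∀ i : Fin ℓ,
      frechetDist (segCurve (Q (t i.castSucc)) (Q (t i.succ)))
          (subcurve Q (t i.castSucc) (t i.succ)) ≤ δ ∧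
      ∀ s : unitInterval, t i.castSucc ≤ s → s ≤ t i.succ →
        Q s ∈ Set.uIcc (Q (t i.castSucc)) (Q (t i.succ))

/-- `Q'` is a `δ`-straightening of `Q`. -/
def IsStraightening (δ : ℝ) (Q Q' : unitInterval → ℝ) : Prop :=
  ∃ (ℓ : ℕ) (t : Fin (ℓ + 1) → unitInterval),
    StraighteningData δ Q ℓ t ∧ Q' = polyCurve ℓ (fun i => Q (t i))

/-- The data of a `δ`-signature of the curve `Q`: parameters
`0 = t 0 < … < t (Fin.last ℓ) = 1` with the locality property, non-degenerate
vertex-range-preserving interior vertices, and the `δ`-edge-length property. -/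
def SignatureData (δ : ℝ) (Q : unitInterval → ℝ) (ℓ : ℕ)
    (t : Fin (ℓ + 1) → unitInterval) : Prop :=
  StrictMono t ∧ t 0 = 0 ∧ t (Fin.last ℓ) = 1 ∧
    (∀ i : Fin ℓ,
      frechetDist (segCurve (Q (t i.castSucc)) (Q (t i.succ)))
          (subcurve Q (t i.castSucc) (t i.succ)) ≤ δ) ∧
    (∀ i : ℕ, ∀ _h1 : 0 < i, ∀ _h2 : i < ℓ,
      (Q (t ⟨i - 1, by omega⟩) < Q (t ⟨i, by omega⟩) ∧
        Q (t ⟨i + 1, by omega⟩) < Q (t ⟨i, by omega⟩) ∧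
        ∀ s : unitInterval, t ⟨i - 1, by omega⟩ ≤ s → s ≤ t ⟨i + 1, by omega⟩ →
          Q s ≤ Q (t ⟨i, by omega⟩)) ∨
      (Q (t ⟨i, by omega⟩) < Q (t ⟨i - 1, by omega⟩) ∧
        Q (t ⟨i, by omega⟩) < Q (t ⟨i + 1, by omega⟩) ∧
        ∀ s : unitInterval, t ⟨i - 1, by omega⟩ ≤ s → s ≤ t ⟨i + 1, by omega⟩ →
          Q (t ⟨i, by omega⟩) ≤ Q s)) ∧
    (∀ _h : 1 ≤ ℓ,
      δ < |Q (t ⟨1, by omega⟩) - Q (t 0)| ∧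
      δ < |Q (t (Fin.last ℓ)) - Q (t ⟨ℓ - 1, by omega⟩)|) ∧
    (∀ j : ℕ, ∀ _hj1 : 1 ≤ j, ∀ _hj2 : j + 2 ≤ ℓ,
      2 * δ < |Q (t ⟨j + 1, by omega⟩) - Q (t ⟨j, by omega⟩)|)

/-- `Q'` is a `δ`-signature of `Q`. -/
def IsSignature (δ : ℝ) (Q Q' : unitInterval → ℝ) : Prop :=
  ∃ (ℓ : ℕ) (t : Fin (ℓ + 1) → unitInterval),
    SignatureData δ Q ℓ t ∧ Q' = polyCurve ℓ (fun i => Q (t i))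

/-- Vertex `j` of the polygonal curve on `q` `δ`-visits vertex `a` of the
polygonal curve on `p` under the monotone traversal `(f, g)`: they are within
distance `δ`, and the traversal matches one of them to the other vertex or to the
interior of an edge incident to it. -/
def Visits (δ : ℝ) (m k : ℕ) (p : Fin (m + 1) → ℝ) (q : Fin (k + 1) → ℝ)
    (f g : unitInterval → unitInterval) (j : Fin (k + 1)) (a : Fin (m + 1)) : Prop :=
  |q j - p a| ≤ δ ∧
    ((∃ t : unitInterval, g t = vparam k j ∧ |(f t : ℝ) * (m : ℝ) - ((a : ℕ) : ℝ)| < 1) ∨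
     (∃ t : unitInterval, f t = vparam m a ∧ |(g t : ℝ) * (k : ℝ) - ((j : ℕ) : ℝ)| < 1))


namespace VAux
open unitInterval

lemma mono_surj_zero (f : I → I) (hm : Monotone f) (hs : Function.Surjective f) : f 0 = 0 := by
  obtain ⟨s, hsf⟩ := hs 0
  have h1 : f 0 ≤ f s := hm (by exact Subtype.coe_le_coe.mp (unitInterval.nonneg s))
  rw [hsf] at h1
  exact le_antisymm h1 (Subtype.coe_le_coe.mp (unitInterval.nonneg (f 0)))

lemma mono_surj_one (f : I → I) (hm : Monotone f) (hs : Function.Surjective f) : f 1 = 1 := by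
  obtain ⟨s, hsf⟩ := hs 1
  have h1 : f s ≤ f 1 := hm (Subtype.coe_le_coe.mp (unitInterval.le_one s))
  rw [hsf] at h1
  exact le_antisymm (Subtype.coe_le_coe.mp (unitInterval.le_one (f 1))) h1

lemma ivt_I (g : I → I) (hg : Continuous g) {a b : I} (hab : a ≤ b) {w : I}
    (h1 : g a ≤ w) (h2 : w ≤ g b) : ∃ s : I, a ≤ s ∧ s ≤ b ∧ g s = w := by
  set F : ℝ → ℝ := fun x => (g (Set.projIcc 0 1 zero_le_one x) : ℝ) with hF
  have hFc : Continuous F := continuous_subtype_val.comp (hg.comp continuous_projIcc)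
  have hFa : F a = g a := by simp [hF, Set.projIcc_val]
  have hFb : F b = g b := by simp [hF, Set.projIcc_val]
  have hsub : Set.Icc (F a) (F b) ⊆ F '' Set.Icc (a:ℝ) (b:ℝ) :=
    intermediate_value_Icc (Subtype.coe_le_coe.mpr hab) hFc.continuousOn
  have hw : (w:ℝ) ∈ Set.Icc (F a) (F b) := by
    rw [hFa, hFb]; exact ⟨Subtype.coe_le_coe.mpr h1, Subtype.coe_le_coe.mpr h2⟩
  obtain ⟨x, hx, hxw⟩ := hsub hw
  have hxI : x ∈ I := ⟨le_trans (unitInterval.nonneg a) hx.1, le_trans hx.2 (unitInterval.le_one b)⟩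
  refine ⟨⟨x, hxI⟩, hx.1, hx.2, ?_⟩
  apply Subtype.ext
  rw [← hxw]
  simp [hF, Set.projIcc_of_mem zero_le_one hxI]

lemma polyCurve_eval_strict (k : ℕ) (u : Fin (k + 1) → ℝ) (e : ℕ) (he : e < k) (w : I)
    (h1 : (e : ℝ) ≤ (w : ℝ) * k) (h2 : (w : ℝ) * k < e + 1) :
    polyCurve k u w = (1 - ((w : ℝ) * k - e)) * u ⟨e, by omega⟩
      + ((w : ℝ) * k - e) * u ⟨e + 1, by omega⟩ := by
  have hx0 : (0:ℝ) ≤ (w:ℝ) * k := le_trans (by positivity) h1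
  have hfl : Nat.floor ((w:ℝ) * k) = e := by
    rw [Nat.floor_eq_iff hx0]
    exact ⟨h1, by exact_mod_cast h2⟩
  have hmin : min (Nat.floor ((w:ℝ)*k)) (k-1) = e := by rw [hfl]; omega
  simp only [polyCurve, hmin, smul_eq_mul]
  have h3 : min e k = e := by omega
  have h4 : min (e+1) k = e + 1 := by omega
  congr 2 <;> simp [h3, h4]

lemma polyCurve_eval (k : ℕ) (u : Fin (k + 1) → ℝ) (e : ℕ) (he : e < k) (w : I)
    (h1 : (e : ℝ) ≤ (w : ℝ) * k) (h2 : (w : ℝ) * k ≤ e + 1) :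
    polyCurve k u w = (1 - ((w : ℝ) * k - e)) * u ⟨e, by omega⟩
      + ((w : ℝ) * k - e) * u ⟨e + 1, by omega⟩ := by
  rcases lt_or_eq_of_le h2 with hlt | hxe
  · exact polyCurve_eval_strict k u e he w h1 hlt
  · -- (w:ℝ)*k = e+1
    rcases eq_or_lt_of_le (Nat.succ_le_of_lt he) with hek | hek
    · -- e + 1 = k
      have hfl : Nat.floor ((w:ℝ) * k) = e + 1 := by
        rw [hxe]; exact_mod_cast Nat.floor_natCast (e+1)
      have hmin : min (Nat.floor ((w:ℝ)*k)) (k-1) = e := by rw [hfl]; omega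
      simp only [polyCurve, hmin, smul_eq_mul]
      have h3 : min e k = e := by omega
      have h4 : min (e+1) k = e + 1 := by omega
      congr 2 <;> simp [h3, h4]
    · -- e + 1 < k
      have h1' : ((e+1 : ℕ) : ℝ) ≤ (w:ℝ) * k := by push_cast; linarith
      have h2' : (w:ℝ) * k < ((e+1:ℕ):ℝ) + 1 := by push_cast; linarith [hxe]
      rw [polyCurve_eval_strict k u (e+1) hek w h1' h2']
      have hc : (w:ℝ)*k - ((e+1 : ℕ):ℝ) = 0 := by push_cast; linarith
      have hd : (w:ℝ)*k - ((e : ℕ):ℝ) = 1 := by push_cast; linarith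
      rw [hc, hd]
      norm_num

lemma polyCurve_neg (k : ℕ) (u : Fin (k + 1) → ℝ) (w : I) :
    polyCurve k (fun i => -u i) w = - polyCurve k u w := by
  simp only [polyCurve, smul_eq_mul]
  ring

lemma edge_exists (k : ℕ) (hk : 1 ≤ k) (w : I) :
    min (Nat.floor ((w:ℝ) * k)) (k-1) < k ∧
    ((min (Nat.floor ((w:ℝ) * k)) (k-1) : ℕ) : ℝ) ≤ (w:ℝ) * k ∧
    (w:ℝ) * k ≤ (min (Nat.floor ((w:ℝ) * k)) (k-1) : ℕ) + 1 := by
  have hx0 : (0:ℝ) ≤ (w:ℝ) * k := mul_nonneg (unitInterval.nonneg w) (Nat.cast_nonneg k)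
  have hxk : (w:ℝ) * k ≤ k := by
    have h := unitInterval.le_one w
    nlinarith [Nat.cast_nonneg (α := ℝ) k]
  by_cases hc : Nat.floor ((w:ℝ)*k) ≤ k - 1
  · have hmin : min (Nat.floor ((w:ℝ)*k)) (k-1) = Nat.floor ((w:ℝ)*k) := min_eq_left hc
    refine ⟨by omega, ?_, ?_⟩
    · rw [hmin]; exact Nat.floor_le hx0
    · rw [hmin]; exact le_of_lt (Nat.lt_floor_add_one _)
  · have hmin : min (Nat.floor ((w:ℝ)*k)) (k-1) = k - 1 := min_eq_right (by omega)
    have hkx : (k:ℝ) ≤ (w:ℝ)*k := by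
      have hk2 : k ≤ Nat.floor ((w:ℝ)*k) := by omega
      exact_mod_cast (Nat.le_floor_iff hx0).mp hk2
    have hxk' : (w:ℝ)*k = k := le_antisymm hxk hkx
    refine ⟨by omega, ?_, ?_⟩
    · rw [hmin, hxk']
      exact_mod_cast Nat.sub_le k 1
    · rw [hmin, hxk']
      have h5 : ((k-1:ℕ):ℝ) + 1 = k := by
        have h6 : k - 1 + 1 = k := by omega
        exact_mod_cast congrArg (Nat.cast (R := ℝ)) h6
      rw [h5]

lemma edge_mono (k : ℕ) (w w' : I) (h : w ≤ w') :
    min (Nat.floor ((w:ℝ) * k)) (k-1) ≤ min (Nat.floor ((w':ℝ) * k)) (k-1) := by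
  have hm : Nat.floor ((w:ℝ)*k) ≤ Nat.floor ((w':ℝ)*k) :=
    Nat.floor_le_floor (mul_le_mul_of_nonneg_right (Subtype.coe_le_coe.mpr h) (Nat.cast_nonneg k))
  omega

lemma vparam_mul (k : ℕ) (hk : 1 ≤ k) (i : Fin (k+1)) :
    ((vparam k i : I) : ℝ) * k = (i : ℕ) := by
  show ((i : ℕ) : ℝ) / (k : ℝ) * k = (i : ℕ)
  rw [div_mul_cancel₀]
  exact Nat.cast_ne_zero.mpr (by omega)

lemma polyCurve_bound (k : ℕ) (u : Fin (k + 1) → ℝ) (C : ℝ)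
    (hC : ∀ i, |u i| ≤ C) (w : I) : |polyCurve k u w| ≤ C := by
  rcases Nat.eq_zero_or_pos k with hk | hk
  · subst hk
    have h0 : polyCurve 0 u w = u 0 := by simp [polyCurve]
    rw [h0]; exact hC 0
  · obtain ⟨he, h1, h2⟩ := edge_exists k hk w
    rw [polyCurve_eval k u _ he w h1 h2]
    set θ := (w:ℝ)*k - (min (Nat.floor ((w:ℝ) * k)) (k-1) : ℕ) with hθ
    have hθ0 : 0 ≤ θ := by simp only [hθ]; linarith
    have hθ1 : θ ≤ 1 := by simp only [hθ]; linarith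
    have hA := hC ⟨min (Nat.floor ((w:ℝ) * k)) (k-1), by omega⟩
    have hB := hC ⟨min (Nat.floor ((w:ℝ) * k)) (k-1) + 1, by omega⟩
    have habs := abs_add_le ((1-θ) * u ⟨min (Nat.floor ((w:ℝ) * k)) (k-1), by omega⟩)
      (θ * u ⟨min (Nat.floor ((w:ℝ) * k)) (k-1) + 1, by omega⟩)
    rw [abs_mul, abs_mul, abs_of_nonneg (by linarith : (0:ℝ) ≤ 1 - θ), abs_of_nonneg hθ0] at habs
    refine le_trans habs ?_
    nlinarith [abs_nonneg (u ⟨min (Nat.floor ((w:ℝ) * k)) (k-1), by omega⟩)]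

lemma frechet_extract (P Q : I → ℝ) (hP : Continuous P) (CQ : ℝ)
    (hQb : ∀ w, |Q w| ≤ CQ) (δ' : ℝ) (hd : frechetDist P Q < δ') :
    ∃ f g : I → I, Continuous f ∧ Monotone f ∧ Function.Surjective f ∧
      Continuous g ∧ Monotone g ∧ Function.Surjective g ∧
      ∀ s, |P (f s) - Q (g s)| ≤ δ' := by
  set S := {r : ℝ | ∃ f g : unitInterval → unitInterval,
    Continuous f ∧ Monotone f ∧ Function.Surjective f ∧
    Continuous g ∧ Monotone g ∧ Function.Surjective g ∧
    ∀ t, dist (P (f t)) (Q (g t)) ≤ r} with hS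
  obtain ⟨CP, hCP⟩ := isCompact_univ.exists_bound_of_continuousOn hP.continuousOn
  have hne : S.Nonempty := by
    refine ⟨CP + CQ, ⟨id, id, continuous_id, monotone_id, Function.surjective_id,
      continuous_id, monotone_id, Function.surjective_id, fun s => ?_⟩⟩
    rw [Real.dist_eq]
    calc |P (id s) - Q (id s)| ≤ |P (id s)| + |Q (id s)| := abs_sub _ _
      _ ≤ CP + CQ := add_le_add (hCP _ trivial) (hQb _)
  have hbdd : BddBelow S := by
    refine ⟨0, fun r hr => ?_⟩
    obtain ⟨f, g, _, _, _, _, _, _, hb⟩ := hr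
    exact le_trans dist_nonneg (hb 0)
  have hlt : sInf S < δ' := hd
  obtain ⟨r, hrS, hrlt⟩ := (csInf_lt_iff hbdd hne).mp hlt
  obtain ⟨f, g, h1, h2, h3, h4, h5, h6, hb⟩ := hrS
  exact ⟨f, g, h1, h2, h3, h4, h5, h6, fun s => by
    rw [← Real.dist_eq]; exact le_trans (hb s) (le_of_lt hrlt)⟩

lemma push_right (δ' : ℝ) (k : ℕ) (hk : 1 ≤ k) (u : Fin (k+1) → ℝ) (P : I → ℝ)
    (f g : I → I) (hfc : Continuous f) (hfm : Monotone f)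
    (hgc : Continuous g) (hgm : Monotone g) (hg1 : g 1 = 1)
    (hmatch : ∀ s, |P (f s) - polyCurve k u (g s)| ≤ δ')
    (τlo τ τhi : I) (hτ1 : τlo ≤ τ) (hτ2 : τ ≤ τhi)
    (sj : I) (hsj : f sj = τ)
    (hwin : ∀ s : I, τlo ≤ s → s ≤ τhi → P s ≤ P τ)
    (e : ℕ) (he : e < k)
    (he1 : (e:ℝ) ≤ (g sj : ℝ) * k) (he2 : ((g sj : ℝ)) * k ≤ e + 1)
    (hAB : u ⟨e, by omega⟩ ≤ u ⟨e+1, by omega⟩) :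
    u ⟨e+1, by omega⟩ ≤ P τ + δ' ∨
      ((τhi : ℝ) < 1 ∧ ∃ s' : I, f s' = τhi ∧
        polyCurve k u (g sj) ≤ polyCurve k u (g s')) := by
  by_cases hB : u ⟨e+1, by omega⟩ ≤ P τ + δ'
  · exact Or.inl hB
  push_neg at hB
  right
  have hk0 : (0:ℝ) < k := by exact_mod_cast hk
  set wstar : I := vparam k ⟨e+1, by omega⟩ with hws
  have hwsk : (wstar:ℝ) * k = ((e+1 : ℕ) : ℝ) := vparam_mul k hk _
  have hwle : g sj ≤ wstar := by
    rw [← Subtype.coe_le_coe]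
    have h9 : ((wstar:ℝ)) * k = ((e:ℝ)+1) := by rw [hwsk]; push_cast; ring
    nlinarith
  obtain ⟨sstar, hs1, hs2, hgs⟩ := ivt_I g hgc unitInterval.le_one' hwle (by rw [hg1]; exact unitInterval.le_one')
  have hb1 : (e:ℝ) ≤ (wstar:ℝ)*k := by rw [hwsk]; push_cast; linarith
  have hb2 : (wstar:ℝ)*k ≤ (e:ℝ)+1 := by rw [hwsk]; push_cast; linarith
  have hQs : polyCurve k u wstar = u ⟨e+1, by omega⟩ := by
    rw [polyCurve_eval k u e he wstar hb1 hb2]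
    rw [show ((wstar:ℝ)*k - (e:ℝ)) = 1 by rw [hwsk]; push_cast; ring]
    ring
  have hPs : u ⟨e+1, by omega⟩ - δ' ≤ P (f sstar) := by
    have hm := hmatch sstar
    rw [hgs, hQs] at hm
    have := (abs_le.mp hm).1
    linarith
  have hPτ : P τ < P (f sstar) := by linarith
  have hτlo : τlo ≤ f sstar := le_trans hτ1 (hsj ▸ hfm hs1)
  have hτs : τhi < f sstar := by
    by_contra hcon
    push_neg at hcon
    exact absurd (hwin (f sstar) hτlo hcon) (not_le.mpr hPτ)
  refine ⟨lt_of_lt_of_le (Subtype.coe_lt_coe.mpr hτs) (unitInterval.le_one (f sstar)), ?_⟩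
  obtain ⟨s', hs'1, hs'2, hfs'⟩ := ivt_I f hfc hs1 (hsj ▸ hτ2) (le_of_lt hτs)
  refine ⟨s', hfs', ?_⟩
  have hw' : g sj ≤ g s' := hgm hs'1
  have hw'2 : g s' ≤ wstar := by rw [← hgs]; exact hgm hs'2
  have hb1' : (e:ℝ) ≤ (g s' : ℝ)*k :=
    le_trans he1 (mul_le_mul_of_nonneg_right (Subtype.coe_le_coe.mpr hw') (Nat.cast_nonneg k))
  have hb2' : (g s' : ℝ)*k ≤ (e:ℝ)+1 := by
    have h10 := mul_le_mul_of_nonneg_right (Subtype.coe_le_coe.mpr hw'2) (Nat.cast_nonneg (α := ℝ) k)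
    rw [hwsk] at h10
    push_cast at h10 ⊢
    linarith
  rw [polyCurve_eval k u e he (g sj) he1 he2, polyCurve_eval k u e he (g s') hb1' hb2']
  have hθ : (g sj:ℝ)*k ≤ (g s':ℝ)*k :=
    mul_le_mul_of_nonneg_right (Subtype.coe_le_coe.mpr hw') (Nat.cast_nonneg k)
  nlinarith [mul_nonneg (sub_nonneg.mpr hθ) (sub_nonneg.mpr hAB)]

lemma push_left (δ' : ℝ) (k : ℕ) (hk : 1 ≤ k) (u : Fin (k+1) → ℝ) (P : I → ℝ)
    (f g : I → I) (hfc : Continuous f) (hfm : Monotone f)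
    (hgc : Continuous g) (hgm : Monotone g) (hg0 : g 0 = 0)
    (hmatch : ∀ s, |P (f s) - polyCurve k u (g s)| ≤ δ')
    (τlo τ τhi : I) (hτ1 : τlo ≤ τ) (hτ2 : τ ≤ τhi)
    (sj : I) (hsj : f sj = τ)
    (hwin : ∀ s : I, τlo ≤ s → s ≤ τhi → P s ≤ P τ)
    (e : ℕ) (he : e < k)
    (he1 : (e:ℝ) ≤ (g sj : ℝ) * k) (he2 : ((g sj : ℝ)) * k ≤ e + 1)
    (hBA : u ⟨e+1, by omega⟩ ≤ u ⟨e, by omega⟩) :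
    u ⟨e, by omega⟩ ≤ P τ + δ' ∨
      ((0:ℝ) < (τlo : ℝ) ∧ ∃ s' : I, f s' = τlo ∧
        polyCurve k u (g sj) ≤ polyCurve k u (g s')) := by
  by_cases hB : u ⟨e, by omega⟩ ≤ P τ + δ'
  · exact Or.inl hB
  push_neg at hB
  right
  have hk0 : (0:ℝ) < k := by exact_mod_cast hk
  set wstar : I := vparam k ⟨e, by omega⟩ with hws
  have hwsk : (wstar:ℝ) * k = ((e : ℕ) : ℝ) := vparam_mul k hk _
  have hwle : wstar ≤ g sj := by
    rw [← Subtype.coe_le_coe]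
    nlinarith
  obtain ⟨sstar, hs1, hs2, hgs⟩ := ivt_I g hgc unitInterval.nonneg' (by rw [hg0]; exact unitInterval.nonneg') hwle
  have hb1 : (e:ℝ) ≤ (wstar:ℝ)*k := by rw [hwsk]
  have hb2 : (wstar:ℝ)*k ≤ (e:ℝ)+1 := by rw [hwsk]; push_cast; linarith
  have hQs : polyCurve k u wstar = u ⟨e, by omega⟩ := by
    rw [polyCurve_eval k u e he wstar hb1 hb2]
    rw [show ((wstar:ℝ)*k - (e:ℝ)) = 0 by rw [hwsk]; push_cast; ring]
    ring
  have hPs : u ⟨e, by omega⟩ - δ' ≤ P (f sstar) := by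
    have hm := hmatch sstar
    rw [hgs, hQs] at hm
    have := (abs_le.mp hm).1
    linarith
  have hPτ : P τ < P (f sstar) := by linarith
  have hτhi : f sstar ≤ τhi := le_trans (hsj ▸ hfm hs2) hτ2
  have hτs : f sstar < τlo := by
    by_contra hcon
    push_neg at hcon
    exact absurd (hwin (f sstar) hcon hτhi) (not_le.mpr hPτ)
  refine ⟨lt_of_le_of_lt (unitInterval.nonneg (f sstar)) (Subtype.coe_lt_coe.mpr hτs), ?_⟩
  obtain ⟨s', hs'1, hs'2, hfs'⟩ := ivt_I f hfc hs2 (le_of_lt hτs) (hsj ▸ hτ1)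
  refine ⟨s', hfs', ?_⟩
  have hw' : g s' ≤ g sj := hgm hs'2
  have hw'2 : wstar ≤ g s' := by rw [← hgs]; exact hgm hs'1
  have hb2' : (g s' : ℝ)*k ≤ (e:ℝ)+1 := by
    have h10 := mul_le_mul_of_nonneg_right (Subtype.coe_le_coe.mpr hw') (Nat.cast_nonneg (α := ℝ) k)
    push_cast at he2 ⊢
    linarith
  have hb1' : (e:ℝ) ≤ (g s' : ℝ)*k := by
    have h10 := mul_le_mul_of_nonneg_right (Subtype.coe_le_coe.mpr hw'2) (Nat.cast_nonneg (α := ℝ) k)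
    rw [hwsk] at h10
    linarith
  rw [polyCurve_eval k u e he (g sj) he1 he2, polyCurve_eval k u e he (g s') hb1' hb2']
  have hθ : (g s':ℝ)*k ≤ (g sj:ℝ)*k :=
    mul_le_mul_of_nonneg_right (Subtype.coe_le_coe.mpr hw') (Nat.cast_nonneg k)
  nlinarith [mul_nonneg (sub_nonneg.mpr hθ) (sub_nonneg.mpr hBA)]


set_option maxHeartbeats 1200000 in
lemma key (δ ε : ℝ) (hδ : 0 < δ) (hε : 0 < ε) (k : ℕ) (u : Fin (k+1) → ℝ)
    (P : unitInterval → ℝ) (hPc : Continuous P)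
    (h : frechetDist P (polyCurve k u) ≤ δ)
    (ℓ : ℕ) (t : Fin (ℓ+1) → unitInterval)
    (hmono : StrictMono t) (ht0 : t 0 = 0) (htl : t (Fin.last ℓ) = 1)
    (hext : ∀ i : ℕ, ∀ _h1 : 0 < i, ∀ _h2 : i < ℓ,
      (P (t ⟨i - 1, by omega⟩) < P (t ⟨i, by omega⟩) ∧
        P (t ⟨i + 1, by omega⟩) < P (t ⟨i, by omega⟩) ∧
        ∀ s : unitInterval, t ⟨i - 1, by omega⟩ ≤ s → s ≤ t ⟨i + 1, by omega⟩ →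
          P s ≤ P (t ⟨i, by omega⟩)) ∨
      (P (t ⟨i, by omega⟩) < P (t ⟨i - 1, by omega⟩) ∧
        P (t ⟨i, by omega⟩) < P (t ⟨i + 1, by omega⟩) ∧
        ∀ s : unitInterval, t ⟨i - 1, by omega⟩ ≤ s → s ≤ t ⟨i + 1, by omega⟩ →
          P (t ⟨i, by omega⟩) ≤ P s))
    (hgap : ∀ j : ℕ, ∀ _hj1 : 1 ≤ j, ∀ _hj2 : j + 2 ≤ ℓ,
      2*δ + 2*ε < |P (t ⟨j + 1, by omega⟩) - P (t ⟨j, by omega⟩)|) :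
    ∃ idx : Fin (ℓ+1) → Fin (k+1), Monotone idx ∧ ∀ j, |P (t j) - u (idx j)| ≤ δ + ε := by
  classical
  obtain ⟨CQ, hCQ⟩ : ∃ C, ∀ i, |u i| ≤ C :=
    ⟨Finset.univ.sup' ⟨0, Finset.mem_univ _⟩ (fun i => |u i|),
      fun i => Finset.le_sup' (fun i => |u i|) (Finset.mem_univ i)⟩
  obtain ⟨f, g, hfc, hfm, hfs, hgc, hgm, hgs, hb⟩ :=
    frechet_extract P (polyCurve k u) hPc CQ (fun w => polyCurve_bound k u CQ hCQ w)
      (δ + ε) (lt_of_le_of_lt h (by linarith))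
  rcases Nat.eq_zero_or_pos k with hk0 | hk
  · subst hk0
    refine ⟨fun _ => 0, monotone_const, fun j => ?_⟩
    obtain ⟨s, hs⟩ := hfs (t j)
    have hb' := hb s
    have hQ0 : polyCurve 0 u (g s) = u 0 := by simp [polyCurve]
    rw [hs, hQ0] at hb'
    exact hb'
  have hℓ : 1 ≤ ℓ := by
    rcases Nat.eq_zero_or_pos ℓ with h0 | h1
    · exfalso
      subst h0
      have h01 : (0:I) = (1:I) := by rw [← ht0, ← htl]; rfl
      have := congrArg (Subtype.val) h01
      norm_num at this
    · exact h1
  have hf0 : f 0 = 0 := mono_surj_zero f hfm hfs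
  have hf1 : f 1 = 1 := mono_surj_one f hfm hfs
  have hg0 : g 0 = 0 := mono_surj_zero g hgm hgs
  have hg1 : g 1 = 1 := mono_surj_one g hgm hgs
  choose sel0 hsel0 using (fun j => hfs (t j))
  set sel : Fin (ℓ+1) → I :=
    fun j => if j = 0 then 0 else if j = Fin.last ℓ then 1 else sel0 j with hseldef
  have hselt : ∀ j, f (sel j) = t j := by
    intro j
    simp only [hseldef]
    by_cases h0 : j = 0
    · subst h0; rw [if_pos rfl, hf0, ht0]
    · rw [if_neg h0]
      by_cases h1 : j = Fin.last ℓ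
      · subst h1; rw [if_pos rfl, hf1, htl]
      · rw [if_neg h1]; exact hsel0 j
  have hselmono : Monotone sel := by
    intro a b hab
    rcases eq_or_lt_of_le hab with heq | hlt
    · subst heq; exact le_refl _
    · by_contra hc
      push_neg at hc
      have h2 := hfm (le_of_lt hc)
      rw [hselt a, hselt b] at h2
      exact absurd h2 (not_le.mpr (hmono hlt))
  set w : Fin (ℓ+1) → I := fun j => g (sel j) with hwdef
  have hwmono : Monotone w := fun a b hab => hgm (hselmono hab)
  set e : Fin (ℓ+1) → ℕ := fun j => min (Nat.floor ((w j : ℝ) * k)) (k-1) with hedef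
  have hemono : ∀ a b : Fin (ℓ+1), a ≤ b → e a ≤ e b :=
    fun a b hab => edge_mono k (w a) (w b) (hwmono hab)
  have heprop : ∀ j, e j < k ∧ ((e j : ℕ) : ℝ) ≤ (w j : ℝ) * k ∧ (w j : ℝ) * k ≤ ((e j : ℕ) : ℝ) + 1 :=
    fun j => edge_exists k hk (w j)
  set uu : ℕ → ℝ := fun n => u ⟨min n k, Nat.lt_succ_of_le (min_le_right n k)⟩ with huudef
  have huu : ∀ n (hn : n < k + 1), uu n = u ⟨n, hn⟩ := by
    intro n hn
    rw [huudef]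
    simp only []
    congr 1
    exact Fin.ext (by simp; omega)
  -- neighbor operations
  set prv : Fin (ℓ+1) → Fin (ℓ+1) := fun j => ⟨j.val - 1, by omega⟩ with hprvdef
  set nxt : Fin (ℓ+1) → Fin (ℓ+1) := fun j => ⟨min (j.val + 1) ℓ, by omega⟩ with hnxtdef
  set MaxP : Fin (ℓ+1) → Prop := fun j =>
    P (t (prv j)) < P (t j) ∧ P (t (nxt j)) < P (t j) ∧
      ∀ s : I, t (prv j) ≤ s → s ≤ t (nxt j) → P s ≤ P (t j) with hMaxPdef
  set MinP : Fin (ℓ+1) → Prop := fun j =>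
    P (t j) < P (t (prv j)) ∧ P (t j) < P (t (nxt j)) ∧
      ∀ s : I, t (prv j) ≤ s → s ≤ t (nxt j) → P (t j) ≤ P s with hMinPdef
  have hext' : ∀ j : Fin (ℓ+1), 0 < j.val → j.val < ℓ → MaxP j ∨ MinP j := by
    intro j h1 h2
    have e0 : (⟨j.val, by omega⟩ : Fin (ℓ+1)) = j := Fin.ext rfl
    have e1 : (⟨j.val - 1, by omega⟩ : Fin (ℓ+1)) = prv j := Fin.ext rfl
    have e2 : (⟨j.val + 1, by omega⟩ : Fin (ℓ+1)) = nxt j := Fin.ext (by simp [hnxtdef]; omega)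
    have H := hext j.val h1 h2
    rw [e0, e1, e2] at H
    exact H
  set c : Fin (ℓ+1) → ℕ := fun j =>
    if j = 0 then 0 else if j = Fin.last ℓ then k
    else if MaxP j then (if uu (e j) ≤ uu (e j + 1) then e j + 1 else e j)
    else (if uu (e j + 1) ≤ uu (e j) then e j + 1 else e j) with hcdef
  have hck : ∀ j, c j ≤ k := by
    intro j
    rw [hcdef]
    simp only []
    split_ifs <;> first | omega | (exact le_of_lt (heprop j).1) | (exact (heprop j).1)
  have hcmem : ∀ j, j ≠ 0 → j ≠ Fin.last ℓ → c j = e j ∨ c j = e j + 1 := by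
    intro j h0 h1
    rw [hcdef]
    simp only [if_neg h0, if_neg h1]
    split_ifs <;> simp
  -- the two main facts
  have hbound : ∀ j, |P (t j) - uu (c j)| ≤ δ + ε := by
    intro j
    have hmj : |P (t j) - polyCurve k u (w j)| ≤ δ + ε := by
      have h' := hb (sel j); rw [hselt j] at h'; exact h'
    by_cases h0 : j = 0
    · subst h0
      have hc0 : c 0 = 0 := by simp only [hcdef, if_pos rfl]
      have hw0 : w 0 = 0 := by
        have hs0 : sel 0 = 0 := by simp only [hseldef, if_pos rfl]
        show g (sel 0) = 0
        rw [hs0, hg0]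
      have hQ0 : polyCurve k u (0:I) = u ⟨0, by omega⟩ := by
        have hco : ((0:I):ℝ) = 0 := rfl
        rw [polyCurve_eval k u 0 hk 0 (by rw [hco]; simp) (by rw [hco]; simp)]
        rw [hco]
        norm_num
      rw [hc0, huu 0 (by omega)]
      rw [hw0, hQ0] at hmj
      exact hmj
    by_cases h1 : j = Fin.last ℓ
    · subst h1
      have hl0 : (Fin.last ℓ) ≠ (0 : Fin (ℓ+1)) := by
        intro hh
        have hh2 := congrArg Fin.val hh
        simp at hh2
        omega
      have hcl : c (Fin.last ℓ) = k := by
        simp only [hcdef]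
        rw [if_neg hl0]; simp only [if_true]
      have hwl : w (Fin.last ℓ) = 1 := by
        have hsl : sel (Fin.last ℓ) = 1 := by
          simp only [hseldef]
          rw [if_neg hl0]; simp only [if_true]
        show g (sel (Fin.last ℓ)) = 1
        rw [hsl, hg1]
      have hQ1 : polyCurve k u (1:I) = u ⟨k, by omega⟩ := by
        have hco : ((1:I):ℝ) = 1 := rfl
        have hcast : ((k-1:ℕ):ℝ) = (k:ℝ) - 1 := by
          have hc2 := Nat.cast_sub (R := ℝ) hk
          simpa using hc2
        have hlo : ((k-1:ℕ):ℝ) ≤ ((1:I):ℝ) * k := by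
          rw [hco, one_mul, hcast]; linarith
        have hhi : ((1:I):ℝ) * k ≤ ((k-1:ℕ):ℝ) + 1 := by
          rw [hco, one_mul, hcast]; linarith
        rw [polyCurve_eval k u (k-1) (by omega) 1 hlo hhi]
        rw [show ((1:I):ℝ)*(k:ℝ) - ((k-1:ℕ):ℝ) = 1 by rw [hco, one_mul, hcast]; ring]
        rw [show (⟨k-1+1, by omega⟩ : Fin (k+1)) = ⟨k, by omega⟩ from Fin.ext (by simp; omega)]
        ring
      rw [hcl, huu k (by omega)]
      rw [hwl, hQ1] at hmj
      exact hmj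
    -- interior vertex
    have hj1 : 0 < j.val := Nat.pos_of_ne_zero (fun hh => h0 (Fin.ext hh))
    have hj2 : j.val < ℓ := lt_of_le_of_ne (Nat.lt_succ_iff.mp j.isLt) (fun hh => h1 (Fin.ext hh))
    obtain ⟨heK, he1, he2⟩ := heprop j
    have hxval : polyCurve k u (w j) = (1 - ((w j : ℝ) * k - (e j : ℕ))) * uu (e j)
        + ((w j : ℝ) * k - (e j : ℕ)) * uu (e j + 1) := by
      rw [polyCurve_eval k u (e j) heK (w j) he1 he2,
        huu (e j) (by omega), huu (e j + 1) (by omega)]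
    have hθ0 : (0:ℝ) ≤ (w j : ℝ) * k - (e j : ℕ) := by linarith
    have hθ1 : (w j : ℝ) * k - (e j : ℕ) ≤ 1 := by linarith
    have hxlo : P (t j) - (δ + ε) ≤ polyCurve k u (w j) := by
      linarith [(abs_le.mp hmj).2]
    have hxhi : polyCurve k u (w j) ≤ P (t j) + (δ + ε) := by
      linarith [(abs_le.mp hmj).1]
    have hnval : (nxt j).val = min (j.val + 1) ℓ := by simp only [hnxtdef]
    have hnval' : (nxt j).val = j.val + 1 := by rw [hnval]; omega
    have hpval : (prv j).val = j.val - 1 := by simp only [hprvdef]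
    have hτ1 : t (prv j) ≤ t j := hmono.monotone (by rw [Fin.le_def, hpval]; omega)
    have hτ2 : t j ≤ t (nxt j) := hmono.monotone (by rw [Fin.le_def, hnval']; omega)
    have hcross_right : ((t (nxt j)):ℝ) < 1 →
        (2*δ + 2*ε < |P (t (nxt j)) - P (t j)|) := by
      intro hlt1
      have hne : j.val + 1 ≠ ℓ := by
        intro hh
        have hnl : nxt j = Fin.last ℓ := Fin.ext (by rw [hnval', hh]; rfl)
        rw [hnl, htl] at hlt1
        norm_num at hlt1
      have hgapj := hgap j.val (by omega) (by omega)
      have heq1 : P (t ⟨j.val + 1, by omega⟩) = P (t (nxt j)) :=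
        congrArg (fun x => P (t x)) (Fin.ext (show j.val + 1 = (nxt j).val by rw [hnval']))
      have heq2 : P (t ⟨j.val, by omega⟩) = P (t j) :=
        congrArg (fun x => P (t x)) (Fin.ext rfl)
      rw [heq1, heq2] at hgapj
      exact hgapj
    have hcross_left : (0:ℝ) < ((t (prv j)):ℝ) →
        (2*δ + 2*ε < |P (t j) - P (t (prv j))|) := by
      intro hlt0
      have hne : 2 ≤ j.val := by
        by_contra hh
        push_neg at hh
        have hj1' : j.val = 1 := by omega
        have hp0 : prv j = 0 := Fin.ext (by rw [hpval, hj1']; rfl)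
        rw [hp0, ht0] at hlt0
        norm_num at hlt0
      have hgapj := hgap (j.val - 1) (by omega) (by omega)
      have heq1 : P (t ⟨j.val - 1 + 1, by omega⟩) = P (t j) :=
        congrArg (fun x => P (t x)) (Fin.ext (show j.val - 1 + 1 = j.val by omega))
      have heq2 : P (t ⟨j.val - 1, by omega⟩) = P (t (prv j)) :=
        congrArg (fun x => P (t x)) (Fin.ext (show j.val - 1 = (prv j).val by rw [hpval]))
      rw [heq1, heq2] at hgapj
      exact hgapj
    rcases hext' j hj1 hj2 with hM | hm
    · -- local maximum
      by_cases hdir : uu (e j) ≤ uu (e j + 1)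
      · have hcj : c j = e j + 1 := by
          simp only [hcdef]; rw [if_neg h0, if_neg h1, if_pos hM, if_pos hdir]
        have hAB : u ⟨e j, by omega⟩ ≤ u ⟨e j + 1, by omega⟩ := by
          rw [← huu (e j) (by omega), ← huu (e j + 1) (by omega)]; exact hdir
        have hpush := push_right (δ+ε) k hk u P f g hfc hfm hgc hgm hg1 hb
          (t (prv j)) (t j) (t (nxt j)) hτ1 hτ2 (sel j) (hselt j) hM.2.2
          (e j) heK he1 he2 hAB
        rw [hcj]
        rcases hpush with hup | ⟨hlt1, s', hfs', hQle⟩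
        · have hup' : uu (e j + 1) ≤ P (t j) + (δ + ε) := by
            rw [huu (e j + 1) (by omega)]; exact hup
          have hBx : polyCurve k u (w j) ≤ uu (e j + 1) := by
            rw [hxval]
            nlinarith [mul_nonneg (by linarith : (0:ℝ) ≤ 1 - ((w j : ℝ) * k - (e j : ℕ)))
              (sub_nonneg.mpr hdir)]
          rw [abs_le]
          exact ⟨by linarith, by linarith⟩
        · exfalso
          have hgapj := hcross_right hlt1
          rw [abs_of_neg (by linarith [hM.2.1] : P (t (nxt j)) - P (t j) < 0)] at hgapj
          have hQle' : polyCurve k u (w j) ≤ polyCurve k u (g s') := hQle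
          have hs'b : |P (t (nxt j)) - polyCurve k u (g s')| ≤ δ + ε := by
            have h' := hb s'; rw [hfs'] at h'; exact h'
          linarith [(abs_le.mp hs'b).1, hxlo]
      · have hcj : c j = e j := by
          simp only [hcdef]; rw [if_neg h0, if_neg h1, if_pos hM, if_neg hdir]
        have hdir' : uu (e j + 1) < uu (e j) := not_le.mp hdir
        have hBA : u ⟨e j + 1, by omega⟩ ≤ u ⟨e j, by omega⟩ := by
          rw [← huu (e j) (by omega), ← huu (e j + 1) (by omega)]; exact le_of_lt hdir'
        have hpush := push_left (δ+ε) k hk u P f g hfc hfm hgc hgm hg0 hb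
          (t (prv j)) (t j) (t (nxt j)) hτ1 hτ2 (sel j) (hselt j) hM.2.2
          (e j) heK he1 he2 hBA
        rw [hcj]
        rcases hpush with hup | ⟨hlt0, s', hfs', hQle⟩
        · have hup' : uu (e j) ≤ P (t j) + (δ + ε) := by
            rw [huu (e j) (by omega)]; exact hup
          have hAx : polyCurve k u (w j) ≤ uu (e j) := by
            rw [hxval]
            nlinarith [mul_nonneg hθ0 (sub_nonneg.mpr (le_of_lt hdir'))]
          rw [abs_le]
          exact ⟨by linarith, by linarith⟩
        · exfalso
          have hgapj := hcross_left hlt0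
          rw [abs_of_pos (by linarith [hM.1] : (0:ℝ) < P (t j) - P (t (prv j)))] at hgapj
          have hQle' : polyCurve k u (w j) ≤ polyCurve k u (g s') := hQle
          have hs'b : |P (t (prv j)) - polyCurve k u (g s')| ≤ δ + ε := by
            have h' := hb s'; rw [hfs'] at h'; exact h'
          linarith [(abs_le.mp hs'b).1, hxlo]
    · -- local minimum
      have hnM : ¬ MaxP j := fun hMM => absurd hm.1 (not_lt.mpr (le_of_lt hMM.1))
      have hbn : ∀ s : I, |(-P (f s)) - polyCurve k (fun i => -u i) (g s)| ≤ δ + ε := by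
        intro s
        rw [polyCurve_neg]
        rw [show -P (f s) - -polyCurve k u (g s) = -(P (f s) - polyCurve k u (g s)) by ring,
          abs_neg]
        exact hb s
      have hwinn : ∀ s : I, t (prv j) ≤ s → s ≤ t (nxt j) → -P s ≤ -P (t j) :=
        fun s hs1 hs2 => neg_le_neg (hm.2.2 s hs1 hs2)
      by_cases hdir2 : uu (e j + 1) ≤ uu (e j)
      · have hcj : c j = e j + 1 := by
          simp only [hcdef]; rw [if_neg h0, if_neg h1, if_neg hnM, if_pos hdir2]
        have hABn : -u ⟨e j, by omega⟩ ≤ -u ⟨e j + 1, by omega⟩ := by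
          apply neg_le_neg
          rw [← huu (e j) (by omega), ← huu (e j + 1) (by omega)]; exact hdir2
        have hpush := push_right (δ+ε) k hk (fun i => -u i) (fun s => -P s) f g hfc hfm hgc hgm hg1
          hbn (t (prv j)) (t j) (t (nxt j)) hτ1 hτ2 (sel j) (hselt j) hwinn
          (e j) heK he1 he2 hABn
        rw [hcj]
        rcases hpush with hup | ⟨hlt1, s', hfs', hQle⟩
        · have hup' : -u ⟨e j + 1, by omega⟩ ≤ -P (t j) + (δ + ε) := hup
          have hup'' : P (t j) - (δ + ε) ≤ uu (e j + 1) := by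
            rw [huu (e j + 1) (by omega)]; linarith
          have hBx : uu (e j + 1) ≤ polyCurve k u (w j) := by
            rw [hxval]
            nlinarith [mul_nonneg (by linarith : (0:ℝ) ≤ 1 - ((w j : ℝ) * k - (e j : ℕ)))
              (sub_nonneg.mpr hdir2)]
          rw [abs_le]
          exact ⟨by linarith, by linarith⟩
        · exfalso
          have hgapj := hcross_right hlt1
          rw [abs_of_pos (by linarith [hm.2.1] : (0:ℝ) < P (t (nxt j)) - P (t j))] at hgapj
          have hQle' : polyCurve k u (g s') ≤ polyCurve k u (w j) := by
            have h2 : polyCurve k (fun i => -u i) (g (sel j)) ≤ polyCurve k (fun i => -u i) (g s') := hQle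
            rw [polyCurve_neg, polyCurve_neg] at h2
            have h3 : polyCurve k u (g s') ≤ polyCurve k u (g (sel j)) := by linarith
            exact h3
          have hs'b : |P (t (nxt j)) - polyCurve k u (g s')| ≤ δ + ε := by
            have h' := hb s'; rw [hfs'] at h'; exact h'
          linarith [(abs_le.mp hs'b).2, hxhi]
      · have hcj : c j = e j := by
          simp only [hcdef]; rw [if_neg h0, if_neg h1, if_neg hnM, if_neg hdir2]
        have hdir2' : uu (e j) < uu (e j + 1) := not_le.mp hdir2
        have hBAn : -u ⟨e j + 1, by omega⟩ ≤ -u ⟨e j, by omega⟩ := by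
          apply neg_le_neg
          rw [← huu (e j) (by omega), ← huu (e j + 1) (by omega)]; exact le_of_lt hdir2'
        have hpush := push_left (δ+ε) k hk (fun i => -u i) (fun s => -P s) f g hfc hfm hgc hgm hg0
          hbn (t (prv j)) (t j) (t (nxt j)) hτ1 hτ2 (sel j) (hselt j) hwinn
          (e j) heK he1 he2 hBAn
        rw [hcj]
        rcases hpush with hup | ⟨hlt0, s', hfs', hQle⟩
        · have hup' : -u ⟨e j, by omega⟩ ≤ -P (t j) + (δ + ε) := hup
          have hup'' : P (t j) - (δ + ε) ≤ uu (e j) := by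
            rw [huu (e j) (by omega)]; linarith
          have hAx : uu (e j) ≤ polyCurve k u (w j) := by
            rw [hxval]
            nlinarith [mul_nonneg hθ0 (sub_nonneg.mpr (le_of_lt hdir2'))]
          rw [abs_le]
          exact ⟨by linarith, by linarith⟩
        · exfalso
          have hgapj := hcross_left hlt0
          rw [abs_of_neg (by linarith [hm.1] : P (t j) - P (t (prv j)) < 0)] at hgapj
          have hQle' : polyCurve k u (g s') ≤ polyCurve k u (w j) := by
            have h2 : polyCurve k (fun i => -u i) (g (sel j)) ≤ polyCurve k (fun i => -u i) (g s') := hQle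
            rw [polyCurve_neg, polyCurve_neg] at h2
            linarith
          have hs'b : |P (t (prv j)) - polyCurve k u (g s')| ≤ δ + ε := by
            have h' := hb s'; rw [hfs'] at h'; exact h'
          linarith [(abs_le.mp hs'b).2, hxhi]
  have hord : ∀ i : Fin ℓ, c i.castSucc ≤ c i.succ := by
    intro i
    set a := i.castSucc with hadef
    set b := i.succ with hbdef
    by_cases ha0 : a = 0
    · rw [ha0]
      have hc0 : c 0 = 0 := by simp only [hcdef, if_pos rfl]
      rw [hc0]; omega
    by_cases hbl : b = Fin.last ℓ
    · rw [hbl]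
      have hl0 : (Fin.last ℓ) ≠ (0 : Fin (ℓ+1)) := by
        intro hh; have hh2 := congrArg Fin.val hh; simp at hh2; omega
      have hcb : c (Fin.last ℓ) = k := by
        simp only [hcdef]; rw [if_neg hl0]; simp only [if_true]
      rw [hcb]; exact hck a
    -- both endpoints interior
    have hab : a ≤ b := le_of_lt Fin.castSucc_lt_succ
    have ha1 : 0 < a.val := Nat.pos_of_ne_zero (fun hh => ha0 (Fin.ext hh))
    have haval : a.val = i.val := rfl
    have hbval : b.val = i.val + 1 := rfl
    have ha2 : a.val < ℓ := by rw [haval]; exact i.isLt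
    have hb2 : b.val < ℓ :=
      lt_of_le_of_ne (Nat.lt_succ_iff.mp b.isLt) (fun hh => hbl (Fin.ext hh))
    have hb1 : 0 < b.val := by omega
    have hal : a ≠ Fin.last ℓ := by
      intro hh; have hh2 := congrArg Fin.val hh; simp at hh2; omega
    have hb0 : b ≠ 0 := by
      intro hh; have hh2 := congrArg Fin.val hh; rw [hbval] at hh2; simp at hh2
    have hea : e a ≤ e b := hemono a b hab
    have hcma := hcmem a ha0 hal
    have hcmb := hcmem b hb0 hbl
    by_cases heq : e a = e b
    · -- shared edge: conflict analysis
      rcases hcma with hca | hca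
      · rcases hcmb with hcb | hcb <;> omega
      rcases hcmb with hcb | hcb
      swap
      · omega
      -- bad case : c a = e a + 1, c b = e b, e a = e b
      exfalso
      have hcha : (MaxP a ∧ uu (e a) ≤ uu (e a + 1)) ∨ (MinP a ∧ uu (e a + 1) ≤ uu (e a)) := by
        rcases hext' a ha1 ha2 with hM | hm
        · by_cases hd : uu (e a) ≤ uu (e a + 1)
          · exact Or.inl ⟨hM, hd⟩
          · exfalso
            have hh : c a = e a := by
              simp only [hcdef]; rw [if_neg ha0, if_neg hal, if_pos hM, if_neg hd]
            omega
        · have hnM : ¬ MaxP a := fun hMM => absurd hm.1 (lt_asymm hMM.1)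
          by_cases hd : uu (e a + 1) ≤ uu (e a)
          · exact Or.inr ⟨hm, hd⟩
          · exfalso
            have hh : c a = e a := by
              simp only [hcdef]; rw [if_neg ha0, if_neg hal, if_neg hnM, if_neg hd]
            omega
      have hchb : (MaxP b ∧ uu (e b + 1) < uu (e b)) ∨ (MinP b ∧ uu (e b) < uu (e b + 1)) := by
        rcases hext' b hb1 hb2 with hM | hm
        · by_cases hd : uu (e b) ≤ uu (e b + 1)
          · exfalso
            have hh : c b = e b + 1 := by
              simp only [hcdef]; rw [if_neg hb0, if_neg hbl, if_pos hM, if_pos hd]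
            omega
          · exact Or.inl ⟨hM, not_le.mp hd⟩
        · have hnM : ¬ MaxP b := fun hMM => absurd hm.1 (lt_asymm hMM.1)
          by_cases hd : uu (e b + 1) ≤ uu (e b)
          · exfalso
            have hh : c b = e b + 1 := by
              simp only [hcdef]; rw [if_neg hb0, if_neg hbl, if_neg hnM, if_pos hd]
            omega
          · exact Or.inr ⟨hm, not_le.mp hd⟩
      -- common data
      obtain ⟨heKa, hea1, hea2⟩ := heprop a
      obtain ⟨heKb, heb1, heb2⟩ := heprop b
      rw [← heq] at heb1 heb2
      have hmja : |P (t a) - polyCurve k u (w a)| ≤ δ + ε := by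
        have h' := hb (sel a); rw [hselt a] at h'; exact h'
      have hmjb : |P (t b) - polyCurve k u (w b)| ≤ δ + ε := by
        have h' := hb (sel b); rw [hselt b] at h'; exact h'
      have hxa : polyCurve k u (w a) = (1 - ((w a : ℝ) * k - (e a : ℕ))) * uu (e a)
          + ((w a : ℝ) * k - (e a : ℕ)) * uu (e a + 1) := by
        rw [polyCurve_eval k u (e a) heKa (w a) hea1 hea2,
          huu (e a) (by omega), huu (e a + 1) (by omega)]
      have hxb : polyCurve k u (w b) = (1 - ((w b : ℝ) * k - (e a : ℕ))) * uu (e a)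
          + ((w b : ℝ) * k - (e a : ℕ)) * uu (e a + 1) := by
        rw [polyCurve_eval k u (e a) heKa (w b) heb1 heb2,
          huu (e a) (by omega), huu (e a + 1) (by omega)]
      have hθab : (w a : ℝ) * k ≤ (w b : ℝ) * k :=
        mul_le_mul_of_nonneg_right (Subtype.coe_le_coe.mpr (hwmono hab)) (Nat.cast_nonneg k)
      have hgapj := hgap a.val (by omega) (by omega)
      have heqa : P (t ⟨a.val, by omega⟩) = P (t a) := congrArg (fun x => P (t x)) (Fin.ext rfl)
      have heqb : P (t ⟨a.val + 1, by omega⟩) = P (t b) :=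
        congrArg (fun x => P (t x)) (Fin.ext (show a.val + 1 = b.val by rw [hbval, haval]))
      rw [heqa, heqb] at hgapj
      have hnxta : nxt a = b := Fin.ext (by
        show min (a.val + 1) ℓ = b.val
        rw [hbval, haval]; omega)
      rcases hcha with ⟨hMa, hda⟩ | ⟨hma, hda⟩ <;> rcases hchb with ⟨hMb, hdb⟩ | ⟨hmb, hdb⟩
      · rw [heq] at hda; exact absurd hda (not_le.mpr hdb)
      · -- Max a, Min b
        have hdb' : uu (e a) < uu (e a + 1) := by rw [heq]; exact hdb
        have hvb : P (t b) < P (t a) := by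
          have hv := hMa.2.1; rw [hnxta] at hv; exact hv
        rw [abs_of_neg (by linarith : P (t b) - P (t a) < 0)] at hgapj
        have hxab : polyCurve k u (w a) ≤ polyCurve k u (w b) := by
          rw [hxa, hxb]
          nlinarith [mul_nonneg (sub_nonneg.mpr hθab) (sub_nonneg.mpr (le_of_lt hdb'))]
        linarith [(abs_le.mp hmja).2, (abs_le.mp hmjb).1]
      · -- Min a, Max b
        have hdb' : uu (e a + 1) < uu (e a) := by rw [heq]; exact hdb
        have hvb : P (t a) < P (t b) := by
          have hv := hma.2.1; rw [hnxta] at hv; exact hv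
        rw [abs_of_pos (by linarith : (0:ℝ) < P (t b) - P (t a))] at hgapj
        have hxab : polyCurve k u (w b) ≤ polyCurve k u (w a) := by
          rw [hxa, hxb]
          nlinarith [mul_nonneg (sub_nonneg.mpr hθab) (sub_nonneg.mpr (le_of_lt hdb'))]
        linarith [(abs_le.mp hmja).1, (abs_le.mp hmjb).2]
      · rw [heq] at hda; exact absurd hda (not_le.mpr hdb)
    · have hlt : e a < e b := lt_of_le_of_ne hea heq
      rcases hcma with hca | hca <;> rcases hcmb with hcb | hcb <;> omega
  refine ⟨fun j => ⟨min (c j) k, Nat.lt_succ_of_le (min_le_right _ _)⟩, ?_, ?_⟩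
  · apply Fin.monotone_iff_le_succ.mpr
    intro i
    have h1 := hord i
    have h2 := hck i.castSucc
    have h3 := hck i.succ
    simp only [Fin.mk_le_mk]
    omega
  · intro j
    have hbj := hbound j
    rw [huudef] at hbj
    exact hbj


end VAux

/-- If `d_F(P, Q) ≤ δ` and `P'` is a `δ`-signature of `P` (given by
parameters `t`), then there is a `δ`-visiting order of the vertices of `P'` on the
vertices of the polygonal curve `Q`. -/
theorem exists_visiting_order_of_signature (δ : ℝ) (hδ : 0 < δ)
    (k : ℕ) (u : Fin (k + 1) → ℝ)
    (P : unitInterval → ℝ) (hPc : Continuous P)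
    (h : frechetDist P (polyCurve k u) ≤ δ)
    (ℓ : ℕ) (t : Fin (ℓ + 1) → unitInterval) (hsig : SignatureData δ P ℓ t) :
    ∃ idx : Fin (ℓ + 1) → Fin (k + 1),
      Monotone idx ∧ ∀ j : Fin (ℓ + 1), |P (t j) - u (idx j)| ≤ δ := by
  classical
  obtain ⟨hmono, ht0, htl, _hloc, hext, _hend, hgap⟩ := hsig
  set G : ℕ → ℝ := fun j =>
    if hh : 1 ≤ j ∧ j + 2 ≤ ℓ then
      (|P (t ⟨j + 1, by omega⟩) - P (t ⟨j, by omega⟩)| - 2*δ)/2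
    else 1 with hGdef
  have hGpos : ∀ j, 0 < G j := by
    intro j
    simp only [hGdef]
    split_ifs with hh
    · have hg := hgap j hh.1 hh.2; linarith
    · norm_num
  set S : Finset ℝ := insert 1 ((Finset.range ℓ).image G) with hSdef
  have hSne : S.Nonempty := ⟨1, by simp [hSdef]⟩
  set ε₀ := S.min' hSne with hε₀def
  have hε₀pos : 0 < ε₀ := by
    rw [hε₀def, Finset.lt_min'_iff]
    intro y hy
    rw [hSdef] at hy
    simp only [Finset.mem_insert, Finset.mem_image, Finset.mem_range] at hy
    rcases hy with h1 | ⟨j, _, rfl⟩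
    · rw [h1]; norm_num
    · exact hGpos j
  have hε₀le : ∀ j, j < ℓ → ε₀ ≤ G j := by
    intro j hj
    apply Finset.min'_le
    rw [hSdef]
    simp only [Finset.mem_insert, Finset.mem_image, Finset.mem_range]
    exact Or.inr ⟨j, hj, rfl⟩
  have hfam : ∀ n : ℕ, ∃ idx : Fin (ℓ+1) → Fin (k+1), Monotone idx ∧
      ∀ j, |P (t j) - u (idx j)| ≤ δ + ε₀ / ((n:ℝ) + 2) := by
    intro n
    have hεn : 0 < ε₀ / ((n:ℝ) + 2) := by positivity
    apply VAux.key δ (ε₀/((n:ℝ)+2)) hδ hεn k u P hPc h ℓ t hmono ht0 htl hext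
    intro j hj1 hj2
    have hG := hε₀le j (by omega)
    have hGval : G j = (|P (t ⟨j + 1, by omega⟩) - P (t ⟨j, by omega⟩)| - 2*δ)/2 := by
      simp only [hGdef]
      rw [dif_pos (⟨hj1, hj2⟩ : 1 ≤ j ∧ j + 2 ≤ ℓ)]
    rw [hGval] at hG
    have hlt : ε₀ / ((n:ℝ)+2) < ε₀ := by
      apply div_lt_self hε₀pos
      have : (0:ℝ) ≤ (n:ℝ) := Nat.cast_nonneg n
      linarith
    linarith
  choose idxs hidxmono hidxbound using hfam
  obtain ⟨y, hy⟩ := Finite.exists_infinite_fiber idxs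
  have hinf : (idxs ⁻¹' {y}).Infinite := Set.infinite_coe_iff.mp hy
  obtain ⟨n₀, hn₀⟩ := hinf.nonempty
  refine ⟨y, ?_, ?_⟩
  · rw [← show idxs n₀ = y from hn₀]
    exact hidxmono n₀
  · intro j
    apply le_of_forall_pos_le_add
    intro η hη
    obtain ⟨N, hN⟩ := exists_nat_gt (ε₀ / η)
    obtain ⟨n, hnfib, hnN⟩ := hinf.exists_gt N
    have hbnd := hidxbound n j
    rw [show idxs n = y from hnfib] at hbnd
    have hsmall : ε₀ / ((n:ℝ)+2) ≤ η := by
      rw [div_le_iff₀ (by positivity)]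
      rw [div_lt_iff₀ hη] at hN
      have hcast : (N:ℝ) ≤ (n:ℝ) := Nat.cast_le.mpr (le_of_lt hnN)
      nlinarith
    linarith
end

section
/- Let P, Q : [0,1] → R be polygonal curves with d_F(Q, P) ≤ δ, realized by a monotone traversal φ. If no inner vertex of P δ-visits an inner vertex of Q under φ (and vice versa), then both P and Q are 2δ-monotone. -/
lemma polyCurve_edge {m : ℕ} (p : Fin (m+1) → ℝ) (i : ℕ) (hi : i < m) (t : unitInterval)
    (h0 : ((i:ℝ))/m ≤ (t:ℝ)) (h1 : (t:ℝ) ≤ ((i:ℝ)+1)/m) :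
    polyCurve m p t = (1 - ((t:ℝ)*m - i)) * p ⟨i, by omega⟩ + ((t:ℝ)*m - i) * p ⟨i+1, by omega⟩ := by
  have hm0 : (0:ℝ) < m := by exact_mod_cast Nat.pos_of_ne_zero (by omega)
  have hxi : ((i:ℝ)) ≤ (t:ℝ)*m := by
    rw [div_le_iff₀ hm0] at h0; linarith
  have hxi1 : (t:ℝ)*m ≤ (i:ℝ)+1 := by
    rw [le_div_iff₀ hm0] at h1; linarith
  have hx0 : (0:ℝ) ≤ (t:ℝ)*m := le_trans (by positivity) hxi
  rcases lt_or_eq_of_le hxi1 with hlt | heq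
  · have hfl : Nat.floor ((t:ℝ)*m) = i := by
      rw [Nat.floor_eq_iff (by positivity)]
      constructor
      · exact_mod_cast hxi
      · push_cast; linarith
    simp only [polyCurve, smul_eq_mul, hfl,
      show i ⊓ (m-1) = i from by omega, show i ⊓ m = i from by omega,
      show (i+1) ⊓ m = i+1 from by omega]
  · rcases Nat.lt_or_ge (i+1) m with hm1 | hm1
    · have hfl : Nat.floor ((t:ℝ)*m) = i+1 := by
        have h' : (i:ℝ)+1 = ((i+1:ℕ):ℝ) := by push_cast; ring
        rw [heq, h']; exact Nat.floor_natCast (i+1)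
      simp only [polyCurve, smul_eq_mul, hfl,
        show (i+1) ⊓ (m-1) = i+1 from by omega, show (i+1) ⊓ m = i+1 from by omega,
        show (i+1+1) ⊓ m = i+1+1 from by omega]
      push_cast
      linear_combination (p ⟨i+1+1, by omega⟩ + p ⟨i, by omega⟩ - 2 * p ⟨i+1, by omega⟩ : ℝ) * heq
    · have hfl : Nat.floor ((t:ℝ)*m) = m := by
        have h'' : i + 1 = m := by omega
        rw [heq, show (i:ℝ)+1 = ((i+1:ℕ):ℝ) from by push_cast; ring, h'']
        exact Nat.floor_natCast m
      simp only [polyCurve, smul_eq_mul, hfl,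
        show m ⊓ (m-1) = i from by omega, show i ⊓ m = i from by omega,
        show (i+1) ⊓ m = i+1 from by omega]
lemma vparam_coe (n : ℕ) (i : Fin (n+1)) : ((vparam n i : unitInterval) : ℝ) = ((i:ℕ):ℝ)/(n:ℝ) := rfl

lemma polyCurve_vertex {m : ℕ} (hm : 0 < m) (p : Fin (m+1) → ℝ) (i : Fin (m+1)) :
    polyCurve m p (vparam m i) = p i := by
  have hm0 : (0:ℝ) < m := by exact_mod_cast hm
  rcases Nat.lt_or_ge (i:ℕ) m with hi | hi
  · have h := polyCurve_edge p (i:ℕ) hi (vparam m i)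
      (by rw [vparam_coe]) (by rw [vparam_coe, div_le_div_iff₀ hm0 hm0]; nlinarith)
    rw [h, vparam_coe, div_mul_cancel₀ _ (ne_of_gt hm0)]
    simp
  · have him : (i:ℕ) = m := by omega
    have hc : ((vparam m i : unitInterval) : ℝ) = 1 := by
      rw [vparam_coe, him, div_self (ne_of_gt hm0)]
    have hc1 : ((m-1:ℕ):ℝ) = (m:ℝ) - 1 := by rw [Nat.cast_sub hm, Nat.cast_one]
    have h := polyCurve_edge p (m-1) (by omega) (vparam m i)
      (by rw [hc, hc1, div_le_one hm0]; linarith)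
      (by rw [hc, hc1, le_div_iff₀ hm0]; ring_nf; linarith)
    rw [h, hc, hc1, one_mul]
    have he : (⟨m-1+1, by omega⟩ : Fin (m+1)) = i := by
      apply Fin.ext; simp [him]; omega
    rw [he]
    ring_nf
lemma polyCurve_edge_bounds {m : ℕ} (p : Fin (m+1) → ℝ) (i : ℕ) (hi : i < m)
    (α γ β : unitInterval) (hα : ((i:ℝ))/m ≤ (α:ℝ)) (h1 : α ≤ γ) (h2 : γ ≤ β)
    (hβ : (β:ℝ) ≤ ((i:ℝ)+1)/m) :
    min (polyCurve m p α) (polyCurve m p β) ≤ polyCurve m p γ ∧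
      polyCurve m p γ ≤ max (polyCurve m p α) (polyCurve m p β) := by
  have hm0 : (0:ℝ) < m := by exact_mod_cast Nat.pos_of_ne_zero (by omega)
  have h1' : (α:ℝ) ≤ (γ:ℝ) := h1
  have h2' : (γ:ℝ) ≤ (β:ℝ) := h2
  have eα := polyCurve_edge p i hi α hα (by linarith)
  have eγ := polyCurve_edge p i hi γ (by linarith) (by linarith)
  have eβ := polyCurve_edge p i hi β (by linarith) hβ
  rw [eα, eβ, eγ]
  set A := p ⟨i, by omega⟩
  set B := p ⟨i+1, by omega⟩
  rcases le_total A B with hAB | hAB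
  · constructor
    · refine le_trans (min_le_left _ _) ?_
      nlinarith [mul_le_mul_of_nonneg_right (mul_le_mul_of_nonneg_right h1' (le_of_lt hm0)) (sub_nonneg.mpr hAB)]
    · refine le_trans ?_ (le_max_right _ _)
      nlinarith [mul_le_mul_of_nonneg_right (mul_le_mul_of_nonneg_right h2' (le_of_lt hm0)) (sub_nonneg.mpr hAB)]
  · constructor
    · refine le_trans (min_le_right _ _) ?_
      nlinarith [mul_le_mul_of_nonneg_right (mul_le_mul_of_nonneg_right h2' (le_of_lt hm0)) (sub_nonneg.mpr hAB)]
    · refine le_trans ?_ (le_max_left _ _)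
      nlinarith [mul_le_mul_of_nonneg_right (mul_le_mul_of_nonneg_right h1' (le_of_lt hm0)) (sub_nonneg.mpr hAB)]
lemma edge_index {m : ℕ} (hm : 0 < m) (t : unitInterval) :
    ∃ i : ℕ, i < m ∧ ((i:ℝ))/m ≤ (t:ℝ) ∧ (t:ℝ) ≤ ((i:ℝ)+1)/m ∧
      i = min (Nat.floor ((t:ℝ)*m)) (m-1) := by
  have hm0 : (0:ℝ) < m := by exact_mod_cast hm
  have ht0 : (0:ℝ) ≤ (t:ℝ) := t.2.1
  have ht1 : (t:ℝ) ≤ 1 := t.2.2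
  set x : ℝ := (t:ℝ)*m with hx
  have hx0 : 0 ≤ x := by positivity
  refine ⟨min (Nat.floor x) (m-1), by omega, ?_, ?_, rfl⟩
  · rw [div_le_iff₀ hm0]
    calc ((min (Nat.floor x) (m-1):ℕ):ℝ) ≤ ((Nat.floor x : ℕ):ℝ) := by
          exact_mod_cast min_le_left _ _
      _ ≤ x := Nat.floor_le hx0
  · rw [le_div_iff₀ hm0]
    rcases le_or_gt (Nat.floor x) (m-1) with h | h
    · have : min (Nat.floor x) (m-1) = Nat.floor x := min_eq_left h
      rw [this]
      have := Nat.lt_floor_add_one x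
      linarith
    · have hmin : min (Nat.floor x) (m-1) = m-1 := min_eq_right (by omega)
      rw [hmin, Nat.cast_sub hm, Nat.cast_one]
      have : x ≤ (m:ℝ) := by
        have := mul_le_mul_of_nonneg_right ht1 (le_of_lt hm0)
        rw [one_mul] at this
        exact this
      linarith
lemma exists_good_point {m : ℕ} (hm : 0 < m) (p : Fin (m+1) → ℝ) (u w t : unitInterval)
    (hu : u ≤ t) (hw : t ≤ w) :
    ∃ r : unitInterval, u ≤ r ∧ r ≤ w ∧ polyCurve m p r ≤ polyCurve m p t ∧
      (r = u ∨ r = w ∨ ∃ i : Fin (m+1), r = vparam m i) := by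
  obtain ⟨i, hi, h0, h1, -⟩ := edge_index hm t
  have hm0 : (0:ℝ) < m := by exact_mod_cast hm
  set e0 : unitInterval := vparam m ⟨i, by omega⟩ with he0
  set e1 : unitInterval := vparam m ⟨i+1, by omega⟩ with he1
  have hce0 : (e0:ℝ) = (i:ℝ)/m := rfl
  have hce1 : (e1:ℝ) = ((i:ℝ)+1)/m := by rw [he1, vparam_coe]; norm_num
  -- choose α
  obtain ⟨α, hαu, hαt, hαed, hαtag⟩ :
      ∃ α : unitInterval, u ≤ α ∧ α ≤ t ∧ ((i:ℝ))/m ≤ (α:ℝ) ∧ (α = u ∨ α = e0) := by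
    rcases le_total e0 u with h | h
    · exact ⟨u, le_refl _, hu, by rw [← hce0]; exact h, Or.inl rfl⟩
    · exact ⟨e0, h, by rw [← Subtype.coe_le_coe, hce0]; exact h0, le_of_eq hce0, Or.inr rfl⟩
  obtain ⟨β, hβw, hβt, hβed, hβtag⟩ :
      ∃ β : unitInterval, β ≤ w ∧ t ≤ β ∧ (β:ℝ) ≤ ((i:ℝ)+1)/m ∧ (β = w ∨ β = e1) := by
    rcases le_total w e1 with h | h
    · exact ⟨w, le_refl _, hw, by rw [← hce1]; exact h, Or.inl rfl⟩
    · exact ⟨e1, h, by rw [← Subtype.coe_le_coe, hce1]; exact h1, le_of_eq hce1, Or.inr rfl⟩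
  have hb := (polyCurve_edge_bounds p i hi α t β hαed hαt hβt hβed).1
  rcases le_total (polyCurve m p α) (polyCurve m p β) with h | h
  · refine ⟨α, hαu, le_trans hαt hw, ?_, ?_⟩
    · rw [min_eq_left h] at hb; exact hb
    · rcases hαtag with h' | h'
      · exact Or.inl h'
      · exact Or.inr (Or.inr ⟨⟨i, by omega⟩, h'⟩)
  · refine ⟨β, le_trans hu hβt, hβw, ?_, ?_⟩
    · rw [min_eq_right h] at hb; exact hb
    · rcases hβtag with h' | h'
      · exact Or.inr (Or.inl h')
      · exact Or.inr (Or.inr ⟨⟨i+1, by omega⟩, h'⟩)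
lemma exists_min_on {m : ℕ} (hm : 0 < m) (p : Fin (m+1) → ℝ) (α β : unitInterval)
    (hαβ : α ≤ β) :
    ∃ v, α ≤ v ∧ v ≤ β ∧ ∀ s, α ≤ s → s ≤ β → polyCurve m p v ≤ polyCurve m p s := by
  classical
  set S : Finset unitInterval :=
    (insert α (insert β ((Finset.univ : Finset (Fin (m+1))).image (vparam m)))).filter
      (fun r => α ≤ r ∧ r ≤ β) with hS
  have hne : S.Nonempty := ⟨α, by simp [hS, hαβ]⟩
  obtain ⟨v, hvS, hv⟩ := S.exists_min_image (polyCurve m p) hne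
  rw [hS, Finset.mem_filter] at hvS
  refine ⟨v, hvS.2.1, hvS.2.2, fun s hs1 hs2 => ?_⟩
  obtain ⟨r, hr1, hr2, hr3, hr4⟩ := exists_good_point hm p α β s hs1 hs2
  have hrS : r ∈ S := by
    rw [hS, Finset.mem_filter]
    refine ⟨?_, hr1, hr2⟩
    rcases hr4 with h | h | ⟨i, h⟩
    · simp [h]
    · simp [h]
    · simp only [Finset.mem_insert, Finset.mem_image]
      exact Or.inr (Or.inr ⟨i, Finset.mem_univ i, h.symm⟩)
  exact le_trans (hv r hrS) hr3
lemma polyCurve_neg {m : ℕ} (p : Fin (m+1) → ℝ) (t : unitInterval) :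
    polyCurve m (fun i => - p i) t = - polyCurve m p t := by
  simp only [polyCurve, smul_eq_mul]
  ring
lemma exists_max_on {m : ℕ} (hm : 0 < m) (p : Fin (m+1) → ℝ) (α β : unitInterval)
    (hαβ : α ≤ β) :
    ∃ v, α ≤ v ∧ v ≤ β ∧ ∀ s, α ≤ s → s ≤ β → polyCurve m p s ≤ polyCurve m p v := by
  obtain ⟨v, h1, h2, h3⟩ := exists_min_on hm (fun i => - p i) α β hαβ
  refine ⟨v, h1, h2, fun s hs1 hs2 => ?_⟩
  have := h3 s hs1 hs2
  rw [polyCurve_neg, polyCurve_neg] at this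
  linarith
def MinValleyD (c : ℝ) (P : unitInterval → ℝ) : Prop :=
  ∃ u v w : unitInterval, u ≤ v ∧ v ≤ w ∧ P v < P u - c ∧ P v < P w - c ∧
    ∀ s, u ≤ s → s ≤ w → P v ≤ P s

lemma exists_valley (c : ℝ) (hc : 0 < c) (P : unitInterval → ℝ)
    (hmin : ∀ α β : unitInterval, α ≤ β →
      ∃ v, α ≤ v ∧ v ≤ β ∧ ∀ s, α ≤ s → s ≤ β → P v ≤ P s)
    (hmax : ∀ α β : unitInterval, α ≤ β →
      ∃ v, α ≤ v ∧ v ≤ β ∧ ∀ s, α ≤ s → s ≤ β → P s ≤ P v)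
    (hdec : ∃ s t : unitInterval, s ≤ t ∧ P t < P s - c)
    (hinc : ∃ s t : unitInterval, s ≤ t ∧ P s + c < P t) :
    MinValleyD c P ∨ MinValleyD c (fun s => - P s) := by
  obtain ⟨s1, t1, hst1, hP1⟩ := hdec
  obtain ⟨s2, t2, hst2, hP2⟩ := hinc
  obtain ⟨u', hu'0, hu't1, hu'max⟩ := hmax 0 t1 unitInterval.nonneg'
  obtain ⟨v, hv0, hv1, hvmin⟩ := hmin u' 1 unitInterval.le_one'
  have hPvt1 : P v ≤ P t1 := hvmin t1 hu't1 unitInterval.le_one'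
  have hPs1u' : P s1 ≤ P u' := hu'max s1 unitInterval.nonneg' hst1
  have key1 : P v < P u' - c := by linarith
  by_cases hca : ∃ w, v ≤ w ∧ P v + c < P w
  · obtain ⟨w, hvw, hw⟩ := hca
    exact Or.inl ⟨u', v, w, hv0, hvw, key1, by linarith,
      fun s hs1 _ => hvmin s hs1 unitInterval.le_one'⟩
  · push_neg at hca
    by_cases hb : v ≤ t2
    · have h1 : P t2 ≤ P v + c := hca t2 hb
      have hs2v : P s2 < P v := by linarith
      have hs2u' : s2 ≤ u' := by
        by_contra h
        push_neg at h
        have := hvmin s2 (le_of_lt h) unitInterval.le_one'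
        linarith
      obtain ⟨ν, hν1, hν2, hνmax⟩ := hmax s2 t1 (le_trans hs2u' hu't1)
      have hPu'ν : P u' ≤ P ν := hνmax u' hs2u' hu't1
      refine Or.inr ⟨s2, ν, t1, hν1, hν2, by simp only; linarith, by simp only; linarith,
        fun s hs1 hs2' => by simp only; exact neg_le_neg (hνmax s hs1 hs2')⟩
    · push_neg at hb
      obtain ⟨ν, hν1, hν2, hνmax⟩ := hmax s2 v (le_trans hst2 (le_of_lt hb))
      have hPt2ν : P t2 ≤ P ν := hνmax t2 hst2 (le_of_lt hb)
      by_cases hb2 : P v + c < P ν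
      · refine Or.inr ⟨s2, ν, v, hν1, hν2, by simp only; linarith, by simp only; linarith,
          fun s hs1 hs2' => by simp only; exact neg_le_neg (hνmax s hs1 hs2')⟩
      · exfalso
        push_neg at hb2
        have h3 : P s2 < P v := by linarith
        rcases le_total s2 u' with h | h
        · have := hνmax u' h hv0
          linarith
        · have := hvmin s2 h unitInterval.le_one'
          linarith
set_option maxHeartbeats 1000000 in
lemma core (δ : ℝ) (hδ : 0 < δ) (m k : ℕ) (hm : 0 < m) (hk : 0 < k)
    (p : Fin (m+1) → ℝ) (q : Fin (k+1) → ℝ) (f g : unitInterval → unitInterval)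
    (hfm : Monotone f) (hgm : Monotone g)
    (hfs : Function.Surjective f) (hgs : Function.Surjective g)
    (hreal : ∀ t : unitInterval, |polyCurve m p (f t) - polyCurve k q (g t)| ≤ δ)
    (hnv : ∀ (j : Fin (k + 1)) (a : Fin (m + 1)),
      0 < (j : ℕ) → (j : ℕ) < k → 0 < (a : ℕ) → (a : ℕ) < m →
        ¬ Visits δ m k p q f g j a)
    (hval : MinValleyD (2*δ) (polyCurve m p)) : False := by
  have hm0 : (0:ℝ) < m := by exact_mod_cast hm
  have hk0 : (0:ℝ) < k := by exact_mod_cast hk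
  obtain ⟨u, v, w, huv, hvw, hPu, hPw, hmin⟩ := hval
  -- vertex refinement in P
  obtain ⟨r, hur, hrw, hrv, htag⟩ := exists_good_point hm p u w v huv hvw
  obtain ⟨a, hra⟩ : ∃ a : Fin (m+1), r = vparam m a := by
    rcases htag with h | h | h
    · exfalso; rw [h] at hrv; linarith
    · exfalso; rw [h] at hrv; linarith
    · exact h
  have hpa : polyCurve m p r = p a := by rw [hra]; exact polyCurve_vertex hm p a
  have hpav : p a ≤ polyCurve m p v := by rw [← hpa]; exact hrv
  have hpau : p a < polyCurve m p u - 2*δ := by linarith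
  have hpaw : p a < polyCurve m p w - 2*δ := by linarith
  have hpamin : ∀ s, u ≤ s → s ≤ w → p a ≤ polyCurve m p s := fun s h1 h2 =>
    le_trans hpav (hmin s h1 h2)
  have hur' : (u:ℝ) < (r:ℝ) := by
    rcases lt_or_eq_of_le hur with h | h
    · exact Subtype.coe_lt_coe.mpr h
    · exfalso; rw [← h] at hpa; rw [hpa] at hpau; linarith
  have hrw' : (r:ℝ) < (w:ℝ) := by
    rcases lt_or_eq_of_le hrw with h | h
    · exact Subtype.coe_lt_coe.mpr h
    · exfalso; rw [h] at hpa; rw [hpa] at hpaw; linarith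
  -- traversal times
  obtain ⟨τu, hτu⟩ := hfs u
  obtain ⟨τ, hτ⟩ := hfs r
  obtain ⟨τw, hτw⟩ := hfs w
  have hτuτ : τu ≤ τ := by
    by_contra h
    push_neg at h
    have h2 := hfm (le_of_lt h)
    rw [hτ, hτu] at h2
    exact absurd (Subtype.coe_le_coe.mpr h2) (not_le.mpr hur')
  have hττw : τ ≤ τw := by
    by_contra h
    push_neg at h
    have h2 := hfm (le_of_lt h)
    rw [hτ, hτw] at h2
    exact absurd (Subtype.coe_le_coe.mpr h2) (not_le.mpr hrw')
  have hQU : p a + δ < polyCurve k q (g τu) := by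
    have h2 := abs_le.mp (hreal τu)
    rw [hτu] at h2
    linarith [h2.1, h2.2]
  have hQW : p a + δ < polyCurve k q (g τw) := by
    have h2 := abs_le.mp (hreal τw)
    rw [hτw] at h2
    linarith [h2.1, h2.2]
  have hQT : polyCurve k q (g τ) ≤ p a + δ := by
    have h2 := abs_le.mp (hreal τ)
    rw [hτ, hpa] at h2
    linarith [h2.1, h2.2]
  have hUT : g τu ≤ g τ := hgm hτuτ
  have hTW : g τ ≤ g τw := hgm hττw
  -- vertex refinement in Q
  obtain ⟨r', hUr', hr'W, hQr', htag'⟩ := exists_good_point hk q (g τu) (g τw) (g τ) hUT hTW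
  have hQr'le : polyCurve k q r' ≤ p a + δ := le_trans hQr' hQT
  obtain ⟨j, hrj⟩ : ∃ j : Fin (k+1), r' = vparam k j := by
    rcases htag' with h | h | h
    · exfalso; rw [h] at hQr'le; linarith
    · exfalso; rw [h] at hQr'le; linarith
    · exact h
  have hqj : polyCurve k q r' = q j := by rw [hrj]; exact polyCurve_vertex hk q j
  have hqjle : q j ≤ p a + δ := by rw [← hqj]; exact hQr'le
  have hUr'' : (g τu : ℝ) < (r' : ℝ) := by
    rcases lt_or_eq_of_le hUr' with h | h
    · exact Subtype.coe_lt_coe.mpr h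
    · exfalso; rw [← h] at hQr'le; linarith
  have hr'W' : (r' : ℝ) < (g τw : ℝ) := by
    rcases lt_or_eq_of_le hr'W with h | h
    · exact Subtype.coe_lt_coe.mpr h
    · exfalso; rw [h] at hqj; rw [hqj] at hQW; linarith
  have hj0 : 0 < (j:ℕ) := by
    by_contra h
    push_neg at h
    have hj' : (j:ℕ) = 0 := by omega
    have : (r':ℝ) = 0 := by rw [hrj, vparam_coe, hj']; simp
    have := (g τu).2.1
    linarith [hUr'']
  have hjk : (j:ℕ) < k := by
    have h1 : ((j:ℕ):ℝ)/k < 1 := by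
      rw [← vparam_coe k j, ← hrj]
      linarith [hr'W', (g τw).2.2]
    rw [div_lt_one hk0] at h1
    exact_mod_cast h1
  -- the matching time σ
  obtain ⟨σ, hσ⟩ := hgs r'
  have hτuσ : τu ≤ σ := by
    by_contra h
    push_neg at h
    have h2 := hgm (le_of_lt h)
    rw [hσ] at h2
    exact absurd (Subtype.coe_le_coe.mpr h2) (not_le.mpr hUr'')
  have hστw : σ ≤ τw := by
    by_contra h
    push_neg at h
    have h2 := hgm (le_of_lt h)
    rw [hσ] at h2
    exact absurd (Subtype.coe_le_coe.mpr h2) (not_le.mpr hr'W')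
  have huF : u ≤ f σ := by rw [← hτu]; exact hfm hτuσ
  have hFw : f σ ≤ w := by rw [← hτw]; exact hfm hστw
  have hqjF : |polyCurve m p (f σ) - q j| ≤ δ := by
    have h2 := hreal σ
    rw [hσ, hqj] at h2
    exact h2
  have habs := abs_le.mp hqjF
  have hqjlow : p a - δ ≤ q j := by
    have h1 := hpamin (f σ) huF hFw
    linarith [habs.2]
  -- edge analysis at f σ
  obtain ⟨i, hi, h0, h1, -⟩ := edge_index hm (f σ)
  have hi0le : (i:ℝ) ≤ ((f σ : ℝ))*m := by rw [div_le_iff₀ hm0] at h0; linarith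
  have hile1 : ((f σ : ℝ))*m ≤ (i:ℝ)+1 := by rw [le_div_iff₀ hm0] at h1; linarith
  have hPF := polyCurve_edge p i hi (f σ) h0 h1
  set A0 := p ⟨i, by omega⟩ with hA0d
  set A1 := p ⟨i+1, by omega⟩ with hA1d
  have hv0 : polyCurve m p (vparam m ⟨i, by omega⟩) = A0 := polyCurve_vertex hm p _
  have hv1 : polyCurve m p (vparam m ⟨i+1, by omega⟩) = A1 := polyCurve_vertex hm p _
  have hce0 : ((vparam m (⟨i, by omega⟩ : Fin (m+1)) : unitInterval):ℝ) = (i:ℝ)/m := rfl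
  have hce1 : ((vparam m (⟨i+1, by omega⟩ : Fin (m+1)) : unitInterval):ℝ) = ((i:ℝ)+1)/m := by
    rw [vparam_coe]; norm_num
  -- helper: a visiting inner vertex pair yields False
  have hvisit : ∀ (b : ℕ) (hb : b < m+1), 0 < b → b < m → |q j - p ⟨b, hb⟩| ≤ δ →
      |((f σ : ℝ))*m - (b:ℝ)| < 1 → False := by
    intro b hb hb0 hbm hd hx
    exact hnv j ⟨b, hb⟩ hj0 hjk hb0 hbm ⟨hd, Or.inl ⟨σ, by rw [hσ]; exact hrj, hx⟩⟩
  -- the main case distinction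
  have main : (|q j - A0| ≤ δ ∧ ((f σ : ℝ))*m < (i:ℝ)+1) ∨
      (|q j - A1| ≤ δ ∧ (i:ℝ) < ((f σ : ℝ))*m) ∨
      A0 < q j - δ ∨ A1 < q j - δ := by
    by_cases hc1 : A0 < q j - δ
    · exact Or.inr (Or.inr (Or.inl hc1))
    by_cases hc2 : A1 < q j - δ
    · exact Or.inr (Or.inr (Or.inr hc2))
    push_neg at hc1 hc2
    by_cases hc3 : |q j - A0| ≤ δ
    · rcases lt_or_eq_of_le hile1 with h | h
      · exact Or.inl ⟨hc3, h⟩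
      · have hPFA1 : polyCurve m p (f σ) = A1 := by rw [hPF, h]; ring
        refine Or.inr (Or.inl ⟨?_, by linarith⟩)
        rw [hPFA1] at habs
        rw [abs_le]
        constructor <;> linarith [habs.1, habs.2]
    · push_neg at hc3
      have hA0big : q j + δ < A0 := by
        rcases abs_cases (q j - A0) with ⟨he, _⟩ | ⟨he, _⟩
        · rw [he] at hc3; linarith
        · rw [he] at hc3; linarith
      by_cases hc4 : |q j - A1| ≤ δ
      · rcases lt_or_eq_of_le hi0le with h | h
        · exact Or.inr (Or.inl ⟨hc4, h⟩)
        · exfalso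
          have hPFA0 : polyCurve m p (f σ) = A0 := by rw [hPF, ← h]; ring
          rw [hPFA0] at habs
          linarith [habs.1, habs.2]
      · push_neg at hc4
        have hA1big : q j + δ < A1 := by
          rcases abs_cases (q j - A1) with ⟨he, _⟩ | ⟨he, _⟩
          · rw [he] at hc4; linarith
          · rw [he] at hc4; linarith
        exfalso
        rcases le_total A0 A1 with hA | hA
        · have hp1 : 0 ≤ (((f σ : ℝ))*m - i)*(A1-A0) :=
            mul_nonneg (by linarith) (by linarith)
          have hexp : polyCurve m p (f σ) = A0 + (((f σ : ℝ))*m - i)*(A1 - A0) := by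
            rw [hPF]; ring
          linarith [habs.2]
        · have hp1 : 0 ≤ (1-(((f σ : ℝ))*m - i))*(A0-A1) :=
            mul_nonneg (by linarith) (by linarith)
          have hexp : polyCurve m p (f σ) = A1 + (1-(((f σ : ℝ))*m - i))*(A0 - A1) := by
            rw [hPF]; ring
          linarith [habs.2]
  rcases main with ⟨hd, hlt⟩ | ⟨hd, hlt⟩ | hc | hc
  · -- candidate vertex i
    rcases Nat.eq_zero_or_pos i with hz | hpos
    · -- boundary left : i = 0, contradiction with P u > p a + 2δ
      subst hz
      have hαγ : (vparam m (⟨0, by omega⟩ : Fin (m+1)) : unitInterval) ≤ u := by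
        rw [← Subtype.coe_le_coe, hce0]
        simpa using u.2.1
      have hb := (polyCurve_edge_bounds p 0 hi (vparam m ⟨0, by omega⟩) u (f σ)
        (le_of_eq hce0.symm) hαγ huF h1).2
      rw [hv0] at hb
      have hA0le : A0 ≤ q j + δ := by
        rcases abs_cases (q j - A0) with ⟨he, _⟩ | ⟨he, _⟩ <;> rw [he] at hd <;> linarith
      have hmax := max_le hA0le (show polyCurve m p (f σ) ≤ q j + δ by linarith [habs.1])
      linarith [le_trans hb hmax]
    · refine hvisit i (by omega) hpos (by omega) (by rw [hA0d] at hd; exact hd) ?_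
      rw [abs_lt]
      constructor <;> linarith
  · -- candidate vertex i+1
    rcases Nat.lt_or_ge (i+1) m with hlt2 | hge
    · refine hvisit (i+1) (by omega) (by omega) hlt2 (by rw [hA1d] at hd; push_cast; exact hd) ?_
      push_cast
      rw [abs_lt]
      constructor <;> linarith
    · -- boundary right : i+1 = m
      have hγβ : w ≤ (vparam m (⟨i+1, by omega⟩ : Fin (m+1)) : unitInterval) := by
        rw [← Subtype.coe_le_coe, hce1]
        have : ((i:ℝ)+1)/m = 1 := by
          rw [div_eq_one_iff_eq (ne_of_gt hm0)]
          have : i+1 = m := by omega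
          exact_mod_cast congrArg (Nat.cast : ℕ → ℝ) this
        rw [this]
        exact w.2.2
      have hb := (polyCurve_edge_bounds p i hi (f σ) w (vparam m ⟨i+1, by omega⟩)
        h0 hFw hγβ (le_of_eq hce1)).2
      rw [hv1] at hb
      have hA1le : A1 ≤ q j + δ := by
        rcases abs_cases (q j - A1) with ⟨he, _⟩ | ⟨he, _⟩ <;> rw [he] at hd <;> linarith
      have hmax := max_le (show polyCurve m p (f σ) ≤ q j + δ by linarith [habs.1]) hA1le
      linarith [le_trans hb hmax]
  · -- C1 : A0 < q j - δ, so vertex i lies left of u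
    have hαγ : (vparam m (⟨i, by omega⟩ : Fin (m+1)) : unitInterval) ≤ u := by
      rcases le_total u (vparam m ⟨i, by omega⟩) with h | h
      · exfalso
        have hvw' : (vparam m (⟨i, by omega⟩ : Fin (m+1)) : unitInterval) ≤ w := by
          rw [← Subtype.coe_le_coe, hce0]
          have : (i:ℝ)/m ≤ ((f σ:ℝ)) := h0
          have h2 : ((f σ:ℝ)) ≤ (w:ℝ) := Subtype.coe_le_coe.mpr hFw
          linarith
        have := hpamin _ h hvw'
        rw [hv0] at this
        linarith
      · exact h
    have hb := (polyCurve_edge_bounds p i hi (vparam m ⟨i, by omega⟩) u (f σ)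
      (le_of_eq hce0.symm) hαγ huF h1).2
    rw [hv0] at hb
    have hmax := max_le (show A0 ≤ q j + δ by linarith)
      (show polyCurve m p (f σ) ≤ q j + δ by linarith [habs.1])
    linarith [le_trans hb hmax]
  · -- C2 : A1 < q j - δ, so vertex i+1 lies right of w
    have hγβ : w ≤ (vparam m (⟨i+1, by omega⟩ : Fin (m+1)) : unitInterval) := by
      rcases le_total (vparam m ⟨i+1, by omega⟩) w with h | h
      · exfalso
        have huv' : u ≤ (vparam m (⟨i+1, by omega⟩ : Fin (m+1)) : unitInterval) := by
          rw [← Subtype.coe_le_coe, hce1]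
          have h2 : (u:ℝ) ≤ ((f σ:ℝ)) := Subtype.coe_le_coe.mpr huF
          linarith [h1]
        have := hpamin _ huv' h
        rw [hv1] at this
        linarith
      · exact h
    have hb := (polyCurve_edge_bounds p i hi (f σ) w (vparam m ⟨i+1, by omega⟩)
      h0 hFw hγβ (le_of_eq hce1)).2
    rw [hv1] at hb
    have hmax := max_le (show polyCurve m p (f σ) ≤ q j + δ by linarith [habs.1])
      (show A1 ≤ q j + δ by linarith)
    linarith [le_trans hb hmax]
lemma mono_side (δ : ℝ) (hδ : 0 < δ) (m k : ℕ) (hm : 0 < m) (hk : 0 < k)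
    (p : Fin (m+1) → ℝ) (q : Fin (k+1) → ℝ) (f g : unitInterval → unitInterval)
    (hfm : Monotone f) (hgm : Monotone g)
    (hfs : Function.Surjective f) (hgs : Function.Surjective g)
    (hreal : ∀ t : unitInterval, |polyCurve m p (f t) - polyCurve k q (g t)| ≤ δ)
    (hnv : ∀ (j : Fin (k + 1)) (a : Fin (m + 1)),
      0 < (j : ℕ) → (j : ℕ) < k → 0 < (a : ℕ) → (a : ℕ) < m →
        ¬ Visits δ m k p q f g j a) :
    ApproxMono (2*δ) (polyCurve m p) := by
  by_contra hmono
  rw [ApproxMono] at hmono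
  obtain ⟨hA, hB⟩ := not_or.mp hmono
  unfold ApproxInc at hA
  unfold ApproxDec at hB
  push_neg at hA hB
  obtain ⟨s1, t1, hst1, hP1⟩ := hA
  obtain ⟨s2, t2, hst2, hP2⟩ := hB
  obtain hval | hval := exists_valley (2*δ) (by linarith) (polyCurve m p)
    (exists_min_on hm p) (exists_max_on hm p) ⟨s1, t1, hst1, by linarith⟩
    ⟨s2, t2, hst2, by linarith⟩
  · exact core δ hδ m k hm hk p q f g hfm hgm hfs hgs hreal hnv hval
  · have heq : (fun s => -(polyCurve m p s)) = polyCurve m (fun i => -p i) :=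
      funext fun t => (polyCurve_neg p t).symm
    rw [heq] at hval
    have hreal' : ∀ t : unitInterval,
        |polyCurve m (fun i => -p i) (f t) - polyCurve k (fun i => -q i) (g t)| ≤ δ := by
      intro t
      rw [polyCurve_neg, polyCurve_neg,
        show -polyCurve m p (f t) - -polyCurve k q (g t)
          = -(polyCurve m p (f t) - polyCurve k q (g t)) from by ring, abs_neg]
      exact hreal t
    have hnv' : ∀ (j : Fin (k + 1)) (a : Fin (m + 1)),
        0 < (j : ℕ) → (j : ℕ) < k → 0 < (a : ℕ) → (a : ℕ) < m →
          ¬ Visits δ m k (fun i => -p i) (fun i => -q i) f g j a := by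
      intro j a h1 h2 h3 h4 hv
      refine hnv j a h1 h2 h3 h4 ⟨?_, hv.2⟩
      have h5 := hv.1
      simp only at h5
      rwa [show -q j - -p a = -(q j - p a) from by ring, abs_neg] at h5
    exact core δ hδ m k hm hk _ _ f g hfm hgm hfs hgs hreal' hnv' hval
/-- If a monotone traversal realizes distance `δ` between the
polygonal curves on `p` and `q`, and no inner vertex of one curve `δ`-visits an
inner vertex of the other under the traversal, then both curves are
`2δ`-monotone. -/
theorem approxMono_of_no_inner_visits (δ : ℝ) (hδ : 0 < δ)
    (m k : ℕ) (hm : 0 < m) (hk : 0 < k)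
    (p : Fin (m + 1) → ℝ) (q : Fin (k + 1) → ℝ)
    (f g : unitInterval → unitInterval)
    (hfc : Continuous f) (hgc : Continuous g)
    (hfm : Monotone f) (hgm : Monotone g)
    (hfs : Function.Surjective f) (hgs : Function.Surjective g)
    (hreal : ∀ t : unitInterval, |polyCurve m p (f t) - polyCurve k q (g t)| ≤ δ)
    (hnv : ∀ (j : Fin (k + 1)) (a : Fin (m + 1)),
      0 < (j : ℕ) → (j : ℕ) < k → 0 < (a : ℕ) → (a : ℕ) < m →
        ¬ Visits δ m k p q f g j a) :
    ApproxMono (2 * δ) (polyCurve m p) ∧ ApproxMono (2 * δ) (polyCurve k q) := by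
    refine ⟨mono_side δ hδ m k hm hk p q f g hfm hgm hfs hgs hreal hnv, ?_⟩
    have hreal' : ∀ t : unitInterval, |polyCurve k q (g t) - polyCurve m p (f t)| ≤ δ := by
      intro t; rw [abs_sub_comm]; exact hreal t
    have hnv' : ∀ (a : Fin (m + 1)) (j : Fin (k + 1)),
        0 < (a : ℕ) → (a : ℕ) < m → 0 < (j : ℕ) → (j : ℕ) < k →
          ¬ Visits δ k m q p g f a j := by
      intro a j h1 h2 h3 h4 hv
      exact hnv j a h3 h4 h1 h2 ⟨by rw [abs_sub_comm]; exact hv.1, hv.2.symm⟩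
    exact mono_side δ hδ k m hk hm q p g f hgm hfm hgs hfs hreal' hnv'
end

section
/- Fix integers d, k ≥ 1 with k dividing d, and let d' = k · 2^{d/k}. Define a map φ_A : {0,1}^d → {0,1}^{d'} by: partition a into k blocks a_0, …, a_{k−1} of length d/k; letting â_i ∈ {0,…,2^{d/k}−1} denote block a_i read as a binary number, set φ_A(a)[i · 2^{d/k} + â_i] = 1 for each i and all other entries to 0. Define φ_B : {0,1}^d → {0,1}^{d'} by: with the same block partition b_0, …, b_{k−1} of b, set φ_B(b)[i · 2^{d/k} + β̂] = 1 for every i and every β ∈ {0,1}^{d/k} with ⟨b_i, β⟩ > 0, and all other entries to 0. Then for all a, b ∈ {0,1}^d: ⟨a, b⟩ = 0 if and only if ⟨φ_A(a), φ_B(b)⟩ = 0. Moreover, φ_A(a) has exactly k nonzero entries. -/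
/-- The number `â_i` whose binary representation is the `i`-th length-`c` block of
the 0/1 vector `a`. -/
def hatBlock (c : ℕ) (a : ℕ → Bool) (i : ℕ) : ℕ :=
  ∑ j ∈ Finset.range c, if a (i * c + j) then 2 ^ j else 0

/-- The sparse encoding `φ_A` of a vector `a ∈ {0,1}^{k·c}` into `{0,1}^{k·2^c}`:
position `i · 2^c + â_i` is set to 1 for each block `i`. -/
def encA (c k : ℕ) (a : ℕ → Bool) : ℕ → Bool := fun pos =>
  (List.range k).any fun i => pos == i * 2 ^ c + hatBlock c a i

/-- The encoding `φ_B` of a vector `b ∈ {0,1}^{k·c}` into `{0,1}^{k·2^c}`: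
position `i · 2^c + β̂` is set to 1 iff block `i` of `b` has a common 1 with the
pattern `β`. -/
def encB (c k : ℕ) (b : ℕ → Bool) : ℕ → Bool := fun pos =>
  (List.range k).any fun i =>
    (List.range (2 ^ c)).any fun β =>
      pos == i * 2 ^ c + β &&
        (List.range c).any fun j => b (i * c + j) && Nat.testBit β j

/-- Inner product (over ℕ) of two 0/1 vectors of length `d`. -/
def ip (d : ℕ) (a b : ℕ → Bool) : ℕ :=
  ∑ i ∈ Finset.range d, if a i && b i then 1 else 0

lemma ofBits_lt (c : ℕ) (f : ℕ → Bool) :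
    (∑ t ∈ Finset.range c, if f t then 2 ^ t else 0) < 2 ^ c := by
  induction c with
  | zero => simp
  | succ n ih =>
    rw [Finset.sum_range_succ, pow_succ]
    have : (if f n then 2 ^ n else 0) ≤ 2 ^ n := by split <;> simp
    omega

lemma ofBits_testBit (c : ℕ) (f : ℕ → Bool) (j : ℕ) (hj : j < c) :
    (∑ t ∈ Finset.range c, if f t then 2 ^ t else 0).testBit j = f j := by
  induction c with
  | zero => omega
  | succ n ih =>
    have hrw : (∑ t ∈ Finset.range (n+1), if f t then 2 ^ t else 0)
        = 2 ^ n * (f n).toNat + ∑ t ∈ Finset.range n, if f t then 2 ^ t else 0 := by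
      rw [Finset.sum_range_succ]
      cases f n <;> simp <;> ring
    rw [hrw, Nat.testBit_two_pow_mul_add _ (ofBits_lt n f)]
    rcases Nat.lt_or_ge j n with h | h
    · simp [h, ih h]
    · have : j = n := by omega
      subst this
      cases f j <;> simp

lemma hatBlock_lt (c : ℕ) (a : ℕ → Bool) (i : ℕ) : hatBlock c a i < 2 ^ c :=
  ofBits_lt c (fun j => a (i * c + j))

lemma hatBlock_testBit (c : ℕ) (a : ℕ → Bool) (i j : ℕ) (hj : j < c) :
    (hatBlock c a i).testBit j = a (i * c + j) :=
  ofBits_testBit c (fun j => a (i * c + j)) j hj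

lemma decomp_unique {c i i' r r' : ℕ} (hr : r < 2 ^ c) (hr' : r' < 2 ^ c)
    (h : i * 2 ^ c + r = i' * 2 ^ c + r') : i = i' ∧ r = r' := by
  have hp : 0 < 2 ^ c := Nat.pow_pos (by norm_num)
  have hd : ∀ x y : ℕ, y < 2 ^ c → (x * 2 ^ c + y) / 2 ^ c = x := by
    intro x y hy
    rw [mul_comm, Nat.mul_add_div hp, Nat.div_eq_of_lt hy, Nat.add_zero]
  have hi : i = i' := by rw [← hd i r hr, ← hd i' r' hr', h]
  subst hi
  exact ⟨rfl, by omega⟩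

lemma encA_iff (c k : ℕ) (a : ℕ → Bool) (pos : ℕ) :
    encA c k a pos = true ↔ ∃ i < k, pos = i * 2 ^ c + hatBlock c a i := by
  simp [encA]

lemma encB_iff (c k : ℕ) (b : ℕ → Bool) (pos : ℕ) :
    encB c k b pos = true ↔ ∃ i < k, ∃ β < 2 ^ c, pos = i * 2 ^ c + β ∧
      ∃ j < c, b (i * c + j) = true ∧ β.testBit j = true := by
  simp [encB, and_assoc]

/-- correctness of the reduction from Orthogonal Vectors to
one-sided sparse Orthogonal Vectors: for `d = k·c` and `d' = k·2^c`,
`⟨a, b⟩ = 0` iff `⟨φ_A(a), φ_B(b)⟩ = 0`, and `φ_A(a)` has exactly `k`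
nonzero entries. -/
theorem sparseOV_reduction_correct (k c : ℕ) (hk : 0 < k) (hc : 0 < c)
    (a b : ℕ → Bool) :
    (ip (k * c) a b = 0 ↔ ip (k * 2 ^ c) (encA c k a) (encB c k b) = 0) ∧
    ((Finset.range (k * 2 ^ c)).filter (fun pos => encA c k a pos = true)).card
      = k := by
  have hp : 0 < 2 ^ c := Nat.pow_pos (by norm_num)
  have ipz : ∀ d (a' b' : ℕ → Bool), ip d a' b' = 0 ↔
      ∀ t, t < d → ¬(a' t = true ∧ b' t = true) := by
    intro d a' b'
    rw [ip, Finset.sum_eq_zero_iff]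
    constructor
    · intro h t ht hab
      have := h t (Finset.mem_range.mpr ht)
      simp [hab.1, hab.2] at this
    · intro h t ht
      have h1 := h t (Finset.mem_range.mp ht)
      simp only [Bool.and_eq_true]
      rw [if_neg h1]
  have bound : ∀ i r : ℕ, i < k → r < 2 ^ c → i * 2 ^ c + r < k * 2 ^ c := by
    intro i r hi hr
    have h1 : i * 2 ^ c + r < (i + 1) * 2 ^ c := by
      have : (i + 1) * 2 ^ c = i * 2 ^ c + 2 ^ c := by ring
      omega
    have h2 : (i + 1) * 2 ^ c ≤ k * 2 ^ c :=
      Nat.mul_le_mul_right _ (Nat.succ_le_of_lt hi)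
    omega
  constructor
  · rw [ipz, ipz]
    constructor
    · intro h pos hpos hAB
      obtain ⟨hA, hB⟩ := hAB
      obtain ⟨i, hi, hpe⟩ := (encA_iff c k a pos).mp hA
      obtain ⟨i', hi', β, hβ, hpe', j, hj, hb, hβj⟩ := (encB_iff c k b pos).mp hB
      obtain ⟨hii, hββ⟩ := decomp_unique (hatBlock_lt c a i) hβ (hpe.symm.trans hpe')
      subst hii
      subst hββ
      have ha : a (i * c + j) = true := by
        rw [← hatBlock_testBit c a i j hj]; exact hβj
      have htlt : i * c + j < k * c := by
        have h1 : i * c + j < (i + 1) * c := by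
          have : (i + 1) * c = i * c + c := by ring
          omega
        have h2 : (i + 1) * c ≤ k * c :=
          Nat.mul_le_mul_right _ (Nat.succ_le_of_lt hi)
        omega
      exact h (i * c + j) htlt ⟨ha, hb⟩
    · intro h t ht hab
      set i := t / c with hidef
      set j := t % c with hjdef
      have hi : i < k := by
        rw [hidef]
        exact Nat.div_lt_iff_lt_mul hc |>.mpr (by omega)
      have hj : j < c := Nat.mod_lt _ hc
      have htij : t = i * c + j := by
        rw [hidef, hjdef, mul_comm]
        exact (Nat.div_add_mod t c).symm
      have hA : encA c k a (i * 2 ^ c + hatBlock c a i) = true :=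
        (encA_iff c k a _).mpr ⟨i, hi, rfl⟩
      have hB : encB c k b (i * 2 ^ c + hatBlock c a i) = true := by
        refine (encB_iff c k b _).mpr ⟨i, hi, hatBlock c a i, hatBlock_lt c a i, rfl,
          j, hj, ?_, ?_⟩
        · rw [← htij]; exact hab.2
        · rw [hatBlock_testBit c a i j hj, ← htij]; exact hab.1
      exact h _ (bound i _ hi (hatBlock_lt c a i)) ⟨hA, hB⟩
  · have himg : (Finset.range (k * 2 ^ c)).filter (fun pos => encA c k a pos = true)
        = (Finset.range k).image (fun i => i * 2 ^ c + hatBlock c a i) := by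
      ext pos
      simp only [Finset.mem_filter, Finset.mem_range, Finset.mem_image]
      constructor
      · rintro ⟨_, hA⟩
        obtain ⟨i, hi, hpe⟩ := (encA_iff c k a pos).mp hA
        exact ⟨i, hi, hpe.symm⟩
      · rintro ⟨i, hi, rfl⟩
        exact ⟨bound i _ hi (hatBlock_lt c a i), (encA_iff c k a _).mpr ⟨i, hi, rfl⟩⟩
    rw [himg, Finset.card_image_of_injOn, Finset.card_range]
    intro x _ y _ hxy
    exact (decomp_unique (hatBlock_lt c a x) (hatBlock_lt c a y) hxy).1
end
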